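/- arXiv:2402.04413 — 19 statements merged into one kernel-verified Lean document; each statement's English description precedes it below -/
import Mathlib

section
/- Let S be a numerical semigroup, d a positive integer, and T, T' numerical semigroups with T/d = T'/d = S and T ⊊ T'. If f = max(T' \ T), then T ∪ {f} is a numerical semigroup with (T ∪ {f})/d = S. -/
open scoped Pointwise

/-- A numerical semigroup: a submonoid of (ℕ,+) with finite complement. -/
def IsNumSgp (S : Set ℕ) : Prop :=
  0 ∈ S ∧ (∀ a ∈ S, ∀ b ∈ S, a + b ∈ S) ∧ (Sᶜ : Set ℕ).Finite

/-- The quotient T/d = {x ∈ ℕ : d·x ∈ T}. -/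
def quot (T : Set ℕ) (d : ℕ) : Set ℕ := {x | d * x ∈ T}

/-- Frobenius number: the largest natural number not in S (0 if S = ℕ). -/
noncomputable def Frob (S : Set ℕ) : ℕ := sSup (Sᶜ : Set ℕ)

/-- d·A = {d·a : a ∈ A}. -/
def dmul (d : ℕ) (A : Set ℕ) : Set ℕ := (fun a => d * a) '' A

/-- M_d(S): the set of numerical semigroups T with T/d = S. -/
def Md (S : Set ℕ) (d : ℕ) : Set (Set ℕ) := {T | IsNumSgp T ∧ quot T d = S}

/-- Pseudo-Frobenius numbers of T. -/
def PF (T : Set ℕ) : Set ℕ := {z | z ∉ T ∧ ∀ t ∈ T, t ≠ 0 → z + t ∈ T}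

/-- The minimal system of generators of a submonoid M of ℕ:
nonzero elements not expressible as a sum of two nonzero elements of M. -/
def msg (M : Set ℕ) : Set ℕ :=
  {x | x ∈ M ∧ x ≠ 0 ∧ ∀ a ∈ M, ∀ b ∈ M, a ≠ 0 → b ≠ 0 → a + b ≠ x}

/-- The submonoid of (ℕ,+) generated by X, as a set. -/
def gen (X : Set ℕ) : Set ℕ := (AddSubmonoid.closure X : AddSubmonoid ℕ)

/-- Irreducible: not an intersection of two numerical semigroups properly containing it. -/
def Irr (S : Set ℕ) : Prop :=
  ¬ ∃ A B : Set ℕ, IsNumSgp A ∧ IsNumSgp B ∧ S ⊂ A ∧ S ⊂ B ∧ S = A ∩ B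

/-- S viewed as a set of integers. -/
def NatSet (S : Set ℕ) : Set ℤ := {z | ∃ n ∈ S, (n : ℤ) = z}

/-- Symmetric: for every integer z ∉ S, F(S) − z ∈ S. -/
def SymNS (S : Set ℕ) : Prop :=
  ∀ z : ℤ, z ∉ NatSet S → (Frob S : ℤ) - z ∈ NatSet S

theorem stmt1 (S T T' : Set ℕ) (d : ℕ) (hd : 0 < d)
    (hS : IsNumSgp S) (hT : IsNumSgp T) (hT' : IsNumSgp T')
    (h1 : quot T d = S) (h2 : quot T' d = S) (hss : T ⊂ T')
    (f : ℕ) (hf : f = sSup (T' \ T)) :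
    IsNumSgp (T ∪ {f}) ∧ quot (T ∪ {f}) d = S := by
 -- begin
  obtain ⟨hT0, hTadd, hTfin⟩ := hT
  obtain ⟨hT'0, hT'add, hT'fin⟩ := hT'
  have hfin : (T' \ T).Finite := hTfin.subset (fun x hx => hx.2)
  have hne : (T' \ T).Nonempty := by
    obtain ⟨x, hx1, hx2⟩ := Set.exists_of_ssubset hss
    exact ⟨x, hx1, hx2⟩
  have hfmem : f ∈ T' \ T := hf ▸ hne.csSup_mem hfin
  have hmax : ∀ x ∈ T' \ T, x ≤ f := fun x hx => hf ▸ le_csSup hfin.bddAbove hx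
  have hfT' : f ∈ T' := hfmem.1
  have hfnT : f ∉ T := hfmem.2
  have hfpos : 0 < f := Nat.pos_of_ne_zero (fun h => hfnT (h ▸ hT0))
  have key : ∀ a ∈ T', f < a → a ∈ T := by
    intro a ha hlt
    by_contra hna
    exact absurd (hmax a ⟨ha, hna⟩) (not_le.mpr hlt)
  have hTsub : T ⊆ T' := hss.1
  constructor
  · refine ⟨Or.inl hT0, ?_, ?_⟩
    · rintro a (ha | ha) b (hb | hb)
      · exact Or.inl (hTadd a ha b hb)
      · have hb' : b = f := hb
        rw [hb']
        rcases Nat.eq_zero_or_pos a with h0 | h0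
        · rw [h0, zero_add]; exact Or.inr rfl
        · exact Or.inl (key _ (hT'add a (hTsub ha) f hfT') (by omega))
      · have ha' : a = f := ha
        rw [ha']
        rcases Nat.eq_zero_or_pos b with h0 | h0
        · rw [h0, add_zero]; exact Or.inr rfl
        · exact Or.inl (key _ (hT'add f hfT' b (hTsub hb)) (by omega))
      · have ha' : a = f := ha
        have hb' : b = f := hb
        rw [ha', hb']
        exact Or.inl (key _ (hT'add f hfT' f hfT') (by omega))
    · exact hTfin.subset (by intro x hx; simp only [Set.mem_compl_iff, Set.mem_union] at hx ⊢; tauto)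
  · ext x
    constructor
    · intro hx
      rcases hx with hx | hx
      · exact h1 ▸ hx
      · have : d * x = f := hx
        have : d * x ∈ T' := this ▸ hfT'
        exact h2 ▸ this
    · intro hx
      have hx' : x ∈ quot T d := h1 ▸ hx
      exact Or.inl hx'
end

section
/- Let S be a numerical semigroup, d a positive integer, and T a numerical semigroup with T/d = S. Then T ∪ {d·F(S) + i : i ∈ ℕ, i ≥ 1} is a numerical semigroup whose quotient by d equals S, where F(S) = max(ℤ \ S) is the Frobenius number of S (assume S ≠ ℕ). -/
open scoped Pointwise

theorem stmt2 (S T : Set ℕ) (d : ℕ) (hd : 0 < d)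
    (hS : IsNumSgp S) (hSne : S ≠ Set.univ)
    (hT : IsNumSgp T) (h : quot T d = S) :
    IsNumSgp (T ∪ {n : ℕ | ∃ i : ℕ, 1 ≤ i ∧ n = d * Frob S + i}) ∧
      quot (T ∪ {n : ℕ | ∃ i : ℕ, 1 ≤ i ∧ n = d * Frob S + i}) d = S := by
  have hgt : ∀ x : ℕ, Frob S < x → x ∈ S := by
    intro x hx
    by_contra hxS
    have : x ≤ Frob S := le_csSup hS.2.2.bddAbove hxS
    omega
  have hmem : ∀ n : ℕ, (n ∈ {n : ℕ | ∃ i : ℕ, 1 ≤ i ∧ n = d * Frob S + i}) ↔ d * Frob S < n := by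
    intro n
    constructor
    · rintro ⟨i, hi, rfl⟩; omega
    · intro hn; exact ⟨n - d * Frob S, by omega, by omega⟩
  constructor
  · refine ⟨Or.inl hT.1, ?_, ?_⟩
    · rintro a (ha | ha) b (hb | hb)
      · exact Or.inl (hT.2.1 a ha b hb)
      · exact Or.inr ((hmem _).2 (by have := (hmem b).1 hb; omega))
      · exact Or.inr ((hmem _).2 (by have := (hmem a).1 ha; omega))
      · exact Or.inr ((hmem _).2 (by have := (hmem a).1 ha; omega))
    · apply hT.2.2.subset
      intro n hn
      simp only [Set.mem_compl_iff, Set.mem_union, not_or] at hn ⊢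
      exact hn.1
  · ext x
    simp only [quot, Set.mem_setOf_eq, Set.mem_union]
    constructor
    · rintro (hx | hx)
      · rw [← h]; exact hx
      · have := (hmem _).1 hx
        exact hgt x (by nlinarith)
    · intro hx
      left
      rw [← h] at hx
      exact hx
end

section
/- Let S ≠ ℕ be a numerical semigroup and d a positive integer. If T is a maximal element (under inclusion) of the set M_d(S) = {T numerical semigroup : T/d = S}, then F(T) = d·F(S). -/
open scoped Pointwise

lemma frob_spec (T : Set ℕ) (hfin : (Tᶜ : Set ℕ).Finite) (hne : T ≠ Set.univ) :
    Frob T ∉ T ∧ ∀ n, Frob T < n → n ∈ T := by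
  have hnemp : (Tᶜ : Set ℕ).Nonempty := Set.nonempty_compl.mpr hne
  have hbdd : BddAbove (Tᶜ : Set ℕ) := hfin.bddAbove
  have hmem : Frob T ∈ Tᶜ := Nat.sSup_mem hnemp hbdd
  refine ⟨hmem, fun n hn => ?_⟩
  by_contra h
  exact absurd (le_csSup hbdd h) (not_le.mpr hn)

theorem stmt3 (S : Set ℕ) (d : ℕ) (hd : 0 < d)
    (hS : IsNumSgp S) (hSne : S ≠ Set.univ)
    (T : Set ℕ) (hT : T ∈ Md S d)
    (hmax : ∀ T' ∈ Md S d, T ⊆ T' → T' = T) :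
    Frob T = d * Frob S := by
  obtain ⟨⟨hT0, hTadd, hTfin⟩, hTq⟩ := hT
  obtain ⟨hS0, hSadd, hSfin⟩ := hS
  obtain ⟨hFS_not, hFS_gt⟩ := frob_spec S hSfin hSne
  have hdF : d * Frob S ∉ T := fun h => hFS_not (hTq ▸ (h : Frob S ∈ quot T d))
  have hTne : T ≠ Set.univ := fun h => hdF (h ▸ Set.mem_univ _)
  obtain ⟨hFT_not, hFT_gt⟩ := frob_spec T hTfin hTne
  have hle : d * Frob S ≤ Frob T := le_csSup hTfin.bddAbove hdF
  rcases lt_or_eq_of_le hle with hlt | heq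
  · exfalso
    have hFSpos : 0 < Frob S := Nat.pos_of_ne_zero (fun h => hFS_not (h ▸ hS0))
    have hfpos : 0 < Frob T := lt_of_le_of_lt (Nat.zero_le _) hlt
    set f := Frob T with hf
    set T' := insert f T with hT'
    have hsub : T ⊆ T' := Set.subset_insert _ _
    have hclosed : ∀ a ∈ T', ∀ b ∈ T', a + b ∈ T' := by
      intro a ha b hb
      rcases ha with rfl | ha
      · rcases hb with rfl | hb
        · exact hsub (hFT_gt _ (by omega))
        · rcases Nat.eq_zero_or_pos b with rfl | hbpos
          · exact Set.mem_insert _ _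
          · exact hsub (hFT_gt _ (by omega))
      · rcases hb with rfl | hb
        · rcases Nat.eq_zero_or_pos a with rfl | hapos
          · rw [Nat.zero_add]; exact Set.mem_insert _ _
          · exact hsub (hFT_gt _ (by omega))
        · exact hsub (hTadd a ha b hb)
    have hT'num : IsNumSgp T' := by
      refine ⟨hsub hT0, hclosed, hTfin.subset fun x hx => ?_⟩
      intro hxT; exact hx (hsub hxT)
    have hT'q : quot T' d = S := by
      ext x
      constructor
      · intro hx
        rcases hx with hx | hx
        · have : d * Frob S < d * x := by omega
          have : Frob S < x := lt_of_mul_lt_mul_left this (Nat.zero_le d)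
          exact hFS_gt _ this
        · exact hTq ▸ (hx : x ∈ quot T d)
      · intro hx
        have : x ∈ quot T d := hTq.symm ▸ hx
        exact hsub this
    have := hmax T' ⟨hT'num, hT'q⟩ hsub
    exact hFT_not (this ▸ Set.mem_insert f T)
  · exact heq.symm
end

section
/- Let S ≠ ℕ be a numerical semigroup and d a positive integer. The set of maximal elements of M_d(S) = {T numerical semigroup : T/d = S} with respect to inclusion is finite. -/
open scoped Pointwise

theorem stmt4 (S : Set ℕ) (d : ℕ) (hd : 0 < d)
    (hS : IsNumSgp S) (hSne : S ≠ Set.univ) :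
    {T | T ∈ Md S d ∧ ∀ T' ∈ Md S d, T ⊆ T' → T' = T}.Finite := by
  set N := d * Frob S with hN
  have hFrobS : ∀ y : ℕ, Frob S < y → y ∈ S := by
    intro y hy
    by_contra h
    exact absurd (le_csSup hS.2.2.bddAbove h) (not_le.mpr hy)
  have key : ∀ T ∈ {T | T ∈ Md S d ∧ ∀ T' ∈ Md S d, T ⊆ T' → T' = T},
      ∀ n, N < n → n ∈ T := by
    intro T hT n hn
    obtain ⟨hTM, hmax⟩ := hT
    have hT' : (T ∪ {n | N < n}) ∈ Md S d := by
      obtain ⟨⟨h0, hadd, hfin⟩, hq⟩ := hTM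
      refine ⟨⟨Or.inl h0, ?_, ?_⟩, ?_⟩
      · rintro a (ha | ha) b (hb | hb)
        · exact Or.inl (hadd a ha b hb)
        · exact Or.inr (lt_of_lt_of_le hb (Nat.le_add_left b a))
        · exact Or.inr (lt_of_lt_of_le ha (Nat.le_add_right a b))
        · exact Or.inr (lt_of_lt_of_le ha (Nat.le_add_right a b))
      · exact hfin.subset (by
          intro x hx
          simp only [Set.mem_compl_iff, Set.mem_union] at *
          tauto)
      · rw [← hq]
        ext x
        simp only [quot, Set.mem_setOf_eq, Set.mem_union]
        constructor
        · rintro (h | h)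
          · exact h
          · have hx : Frob S < x := Nat.lt_of_mul_lt_mul_left h
            have hxS := hFrobS x hx
            rw [← hq] at hxS
            exact hxS
        · exact Or.inl
    have heq := hmax _ hT' Set.subset_union_left
    rw [← heq]
    exact Or.inr hn
  have hfin : {A : Set ℕ | A ⊆ Set.Iic N}.Finite :=
    Set.Finite.finite_subsets (Set.finite_Iic N)
  apply Set.Finite.of_finite_image (f := fun T => T ∩ Set.Iic N)
  · exact hfin.subset (by rintro A ⟨T, _, rfl⟩; exact Set.inter_subset_right)
  · intro T₁ h₁ T₂ h₂ heq
    ext n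
    rcases le_or_gt n N with h | h
    · have hiff : n ∈ T₁ ∩ Set.Iic N ↔ n ∈ T₂ ∩ Set.Iic N := by
        simp only at heq; rw [heq]
      simpa [h] using hiff
    · simp [key T₁ h₁ n h, key T₂ h₂ n h]
end

section
/- Let S be a numerical semigroup and d a positive integer. If there exists a numerical semigroup T with T/d = S, T irreducible, and F(T) = d·F(S), then S is irreducible. -/
open scoped Pointwise

lemma le_frob {T : Set ℕ} (hT : IsNumSgp T) {z : ℕ} (hz : z ∉ T) : z ≤ Frob T :=
  le_csSup hT.2.2.bddAbove hz

lemma frob_not_mem {T : Set ℕ} (hT : IsNumSgp T) {z : ℕ} (hz : z ∉ T) : Frob T ∉ T :=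
  Set.Nonempty.csSup_mem ⟨z, hz⟩ hT.2.2

lemma gt_frob_mem {T : Set ℕ} (hT : IsNumSgp T) {z : ℕ} (hz : Frob T < z) : z ∈ T := by
  by_contra h; exact absurd (le_frob hT h) (not_le.mpr hz)

/-- Adjoining a single element whose translates by nonzero elements stay in T. -/
lemma union_sgp {T : Set ℕ} (hT : IsNumSgp T) {m : ℕ}
    (h1 : ∀ t ∈ T, t ≠ 0 → m + t ∈ T) (h2 : m + m ∈ T) : IsNumSgp (T ∪ {m}) := by
  refine ⟨Or.inl hT.1, ?_, hT.2.2.subset fun z hz hzT => hz (Or.inl hzT)⟩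
  rintro a (ha | ha) b (hb | hb)
  · exact Or.inl (hT.2.1 a ha b hb)
  · rw [Set.mem_singleton_iff] at hb; subst hb
    rcases Nat.eq_zero_or_pos a with rfl | h0
    · exact Or.inr (by simp)
    · exact Or.inl (by rw [add_comm]; exact h1 a ha (by omega))
  · rw [Set.mem_singleton_iff] at ha; subst ha
    rcases Nat.eq_zero_or_pos b with rfl | h0
    · exact Or.inr (by simp)
    · exact Or.inl (h1 b hb (by omega))
  · rw [Set.mem_singleton_iff] at ha hb; subst ha; subst hb
    exact Or.inl h2

/-- Irreducible implies the Frobenius characterization. -/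
lemma irr_char {T : Set ℕ} (hT : IsNumSgp T) (hirr : Irr T) :
    ∀ x, x ∉ T → 2 * x ≠ Frob T → Frob T - x ∈ T := by
  intro x hx h2x
  by_contra hFx
  set F := Frob T with hFdef
  have hxF : x ≤ F := le_frob hT hx
  have hFnot : F ∉ T := frob_not_mem hT hx
  have hF0 : F ≠ 0 := fun h => hFnot (h ▸ hT.1)
  set C : Set ℕ := {z | z ∉ T ∧ F - z ∉ T} with hC
  have hxC : x ∈ C := ⟨hx, hFx⟩
  have hCfin : C.Finite := hT.2.2.subset fun z hz => hz.1
  set m := sSup C with hm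
  have hmC : m ∈ C := Set.Nonempty.csSup_mem ⟨x, hxC⟩ hCfin
  have hmax : ∀ z ∈ C, z ≤ m := fun z hz => le_csSup hCfin.bddAbove hz
  have hmF : m ≤ F := le_frob hT hmC.1
  have h2m : F < 2 * m := by
    rcases lt_or_gt_of_ne h2x with h | h
    · have hFxC : F - x ∈ C := by
        refine ⟨hFx, ?_⟩
        rw [show F - (F - x) = x by omega]
        exact hx
      have := hmax _ hFxC
      omega
    · have := hmax _ hxC; omega
  have hmne : m ≠ F := by
    intro h
    exact hmC.2 (by rw [h, Nat.sub_self]; exact hT.1)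
  have hA : IsNumSgp (T ∪ {F}) := by
    refine union_sgp hT (fun t ht ht0 => gt_frob_mem hT (by omega)) (gt_frob_mem hT (by omega))
  have hkey : ∀ t ∈ T, t ≠ 0 → m + t ∈ T := by
    intro t ht ht0
    by_contra hmt
    have h1 : m + t ≤ F := le_frob hT hmt
    have h2 : F - (m + t) ∉ T := by
      intro h
      have heq : F - m = (F - (m + t)) + t := by omega
      exact hmC.2 (heq ▸ hT.2.1 _ h _ ht)
    have := hmax _ ⟨hmt, h2⟩
    omega
  have hB : IsNumSgp (T ∪ {m}) := union_sgp hT hkey (gt_frob_mem hT (by omega))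
  refine hirr ⟨T ∪ {F}, T ∪ {m}, hA, hB, ⟨Set.subset_union_left, fun h => ?_⟩,
    ⟨Set.subset_union_left, fun h => ?_⟩, ?_⟩
  · exact hFnot (h (Set.mem_union_right _ rfl))
  · exact hmC.1 (h (Set.mem_union_right _ rfl))
  · ext y
    simp only [Set.mem_inter_iff, Set.mem_union, Set.mem_singleton_iff]
    constructor
    · exact fun h => ⟨Or.inl h, Or.inl h⟩
    · rintro ⟨hy1 | hy1, hy2 | hy2⟩
      · exact hy1
      · exact hy1
      · exact hy2
      · exact absurd (hy1.symm.trans hy2) (Ne.symm hmne)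

/-- The Frobenius characterization implies irreducibility. -/
lemma char_irr {S : Set ℕ} (hS : IsNumSgp S)
    (h : ∀ x, x ∉ S → 2 * x ≠ Frob S → Frob S - x ∈ S) : Irr S := by
  rintro ⟨A, B, hA, hB, ⟨hSA, hAS⟩, ⟨hSB, hBS⟩, hint⟩
  obtain ⟨a, haA, haS⟩ : ∃ a, a ∈ A ∧ a ∉ S := by
    by_contra hc; push_neg at hc; exact hAS fun z hz => hc z hz
  obtain ⟨b, hbB, hbS⟩ : ∃ b, b ∈ B ∧ b ∉ S := by
    by_contra hc; push_neg at hc; exact hBS fun z hz => hc z hz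
  have hFnot : Frob S ∉ S := frob_not_mem hS haS
  have hFA : Frob S ∈ A := by
    rcases eq_or_ne (2 * a) (Frob S) with h2 | h2
    · have := hA.2.1 a haA a haA
      rwa [show a + a = Frob S by omega] at this
    · have h1 : Frob S - a ∈ S := h a haS h2
      have h2' : a ≤ Frob S := le_frob hS haS
      have := hA.2.1 a haA _ (hSA h1)
      rwa [show a + (Frob S - a) = Frob S by omega] at this
  have hFB : Frob S ∈ B := by
    rcases eq_or_ne (2 * b) (Frob S) with h2 | h2
    · have := hB.2.1 b hbB b hbB
      rwa [show b + b = Frob S by omega] at this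
    · have h1 : Frob S - b ∈ S := h b hbS h2
      have h2' : b ≤ Frob S := le_frob hS hbS
      have := hB.2.1 b hbB _ (hSB h1)
      rwa [show b + (Frob S - b) = Frob S by omega] at this
  have hmem : Frob S ∈ A ∩ B := ⟨hFA, hFB⟩
  rw [← hint] at hmem
  exact hFnot hmem

theorem stmt5 (S : Set ℕ) (d : ℕ) (hd : 0 < d) (hS : IsNumSgp S)
    (T : Set ℕ) (hT : IsNumSgp T) (hq : quot T d = S)
    (hirr : Irr T) (hF : Frob T = d * Frob S) :
    Irr S := by
  refine char_irr hS fun x hx h2x => ?_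
  have hdx : d * x ∉ T := fun h => hx (hq ▸ (show x ∈ quot T d from h))
  have hxF : x ≤ Frob S := le_frob hS hx
  have h2 : 2 * (d * x) ≠ Frob T := by
    rw [hF, show 2 * (d * x) = d * (2 * x) by ring]
    exact fun h => h2x (Nat.eq_of_mul_eq_mul_left hd h)
  have h3 : Frob T - d * x ∈ T := irr_char hT hirr _ hdx h2
  rw [hF, ← Nat.mul_sub] at h3
  have h5 : Frob S - x ∈ quot T d := h3
  rwa [hq] at h5
end

section
/- Let S be an irreducible numerical semigroup and d a positive integer. Then every maximal element T of M_d(S) = {T : T/d = S} (with respect to inclusion) is irreducible. -/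
open scoped Pointwise

lemma quot_numsgp {A : Set ℕ} {d : ℕ} (hd : 0 < d) (hA : IsNumSgp A) :
    IsNumSgp (quot A d) := by
  obtain ⟨h0, hadd, hfin⟩ := hA
  refine ⟨by simpa [quot] using h0, ?_, ?_⟩
  · intro a ha b hb
    have : d * a + d * b ∈ A := hadd _ ha _ hb
    simpa [quot, Nat.mul_add] using this
  · have : ((quot A d)ᶜ : Set ℕ) = (fun x => d * x) ⁻¹' (Aᶜ) := by
      ext x; simp [quot]
    rw [this]
    exact hfin.preimage (Function.Injective.injOn (fun a b h => by
      exact Nat.eq_of_mul_eq_mul_left hd h))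

theorem stmt6 (S : Set ℕ) (d : ℕ) (hd : 0 < d)
    (hS : IsNumSgp S) (hSne : S ≠ Set.univ) (hirr : Irr S)
    (T : Set ℕ) (hT : T ∈ Md S d)
    (hmax : ∀ T' ∈ Md S d, T ⊆ T' → T' = T) :
    Irr T := by
  rintro ⟨A, B, hA, hB, hTA, hTB, hTAB⟩
  obtain ⟨hTns, hTq⟩ := hT
  have hqi : quot (A ∩ B) d = quot A d ∩ quot B d := by
    ext x; simp [quot, Set.mem_inter_iff]
  have hSAB : S = quot A d ∩ quot B d := by rw [← hTq, hTAB, hqi]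
  have hSA : S ⊆ quot A d := by rw [hSAB]; exact Set.inter_subset_left
  have hSB : S ⊆ quot B d := by rw [hSAB]; exact Set.inter_subset_right
  have key : ∀ C : Set ℕ, IsNumSgp C → T ⊂ C → quot C d ≠ S
  · intro C hC hTC hq
    have hCmem : C ∈ Md S d := ⟨hC, hq⟩
    have := hmax C hCmem hTC.1
    exact hTC.2 (this ▸ Set.Subset.refl _)
  have hA' : quot A d ≠ S := key A hA hTA
  have hB' : quot B d ≠ S := key B hB hTB
  exact hirr ⟨quot A d, quot B d, quot_numsgp hd hA, quot_numsgp hd hB,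
    ⟨hSA, fun h => hA' (Set.Subset.antisymm h hSA)⟩,
    ⟨hSB, fun h => hB' (Set.Subset.antisymm h hSB)⟩,
    hSAB⟩
end

section
/- Let S ≠ ℕ be a numerical semigroup, d a positive integer, and T a non-maximal element of M_d(S). Then max{x ∈ ℕ \ T : T ∪ {x} ∈ M_d(S)} equals max{z ∈ PF(T) : 2z ∈ T and z ∉ d·(ℕ \ S)}. -/
open scoped Pointwise

theorem stmt7 (S : Set ℕ) (d : ℕ) (hd : 0 < d)
    (hS : IsNumSgp S) (hSne : S ≠ Set.univ)
    (T : Set ℕ) (hT : T ∈ Md S d) (hnm : ∃ T' ∈ Md S d, T ⊂ T') :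
    sSup {x | x ∉ T ∧ T ∪ {x} ∈ Md S d} =
      sSup {z | z ∈ PF T ∧ 2 * z ∈ T ∧ z ∉ dmul d Sᶜ} := by
  obtain ⟨⟨hT0, hTadd, hTfin⟩, hTq⟩ := hT
  have key : {x | x ∉ T ∧ T ∪ {x} ∈ Md S d} =
      {z | z ∈ PF T ∧ 2 * z ∈ T ∧ z ∉ dmul d Sᶜ} := by
    ext x
    simp only [Set.mem_setOf_eq]
    constructor
    · rintro ⟨hxT, ⟨⟨h0, hadd, hfin⟩, hq⟩⟩
      have hx0 : x ≠ 0 := fun h => hxT (h ▸ hT0)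
      refine ⟨⟨hxT, fun t ht ht0 => ?_⟩, ?_, ?_⟩
      · have h1 : x + t ∈ T ∪ {x} :=
          hadd x (Set.mem_union_right _ rfl) t (Set.mem_union_left _ ht)
        rcases h1 with h | h
        · exact h
        · have := Set.mem_singleton_iff.mp h; omega
      · have h1 : x + x ∈ T ∪ {x} :=
          hadd x (Set.mem_union_right _ rfl) x (Set.mem_union_right _ rfl)
        rcases h1 with h | h
        · rwa [two_mul]
        · have := Set.mem_singleton_iff.mp h; omega
      · rintro ⟨a, haS, hax⟩
        have hmem : a ∈ quot (T ∪ {x}) d := by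
          show d * a ∈ T ∪ {x}
          exact Set.mem_union_right _ (Set.mem_singleton_iff.mpr hax)
        rw [hq] at hmem
        exact haS hmem
    · rintro ⟨⟨hxT, hPF⟩, h2x, hnd⟩
      refine ⟨hxT, ⟨⟨Set.mem_union_left _ hT0, ?_, hTfin.subset ?_⟩, ?_⟩⟩
      · rintro a (ha | ha) b (hb | hb)
        · exact Set.mem_union_left _ (hTadd a ha b hb)
        · rw [Set.mem_singleton_iff] at hb; subst hb
          by_cases ha0 : a = 0
          · subst ha0; simpa using Set.mem_union_right T rfl
          · exact Set.mem_union_left _ (by rw [add_comm]; exact hPF a ha ha0)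
        · rw [Set.mem_singleton_iff] at ha; subst ha
          by_cases hb0 : b = 0
          · subst hb0; simpa using Set.mem_union_right T rfl
          · exact Set.mem_union_left _ (hPF b hb hb0)
        · rw [Set.mem_singleton_iff] at ha hb; subst ha; subst hb
          exact Set.mem_union_left _ (by rwa [← two_mul])
      · intro y hy
        simp only [Set.mem_compl_iff, Set.mem_union] at hy ⊢
        exact fun h => hy (Or.inl h)
      · ext y
        constructor
        · rintro (h | h)
          · rw [← hTq]; exact h
          · rw [Set.mem_singleton_iff] at h
            by_contra hyS
            exact hnd ⟨y, hyS, h⟩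
        · intro hy
          exact Set.mem_union_left _ (by rw [← hTq] at hy; exact hy)
  rw [key]
end

section
/- Let S ≠ ℕ be a numerical semigroup, d a positive integer, and T ∈ M_d(S) such that d does not divide F(T). Then max{x ∈ ℕ \ T : T ∪ {x} ∈ M_d(S)} = F(T). -/
open scoped Pointwise

theorem stmt8 (S : Set ℕ) (d : ℕ) (hd : 0 < d)
    (hS : IsNumSgp S) (hSne : S ≠ Set.univ)
    (T : Set ℕ) (hT : T ∈ Md S d) (hdvd : ¬ d ∣ Frob T) :
    sSup {x | x ∉ T ∧ T ∪ {x} ∈ Md S d} = Frob T := by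
  obtain ⟨hTns, hq⟩ := hT
  have hc : (Tᶜ : Set ℕ).Finite := hTns.2.2
  have hTne : T ≠ Set.univ := by
    intro h
    apply hSne
    rw [← hq, h]
    ext x
    simp [quot]
  have hne : (Tᶜ : Set ℕ).Nonempty := Set.nonempty_compl.mpr hTne
  have bdd : BddAbove (Tᶜ : Set ℕ) := hc.bddAbove
  have hF : Frob T ∈ (Tᶜ : Set ℕ) := Nat.sSup_mem hne bdd
  have hF' : Frob T ∉ T := hF
  have hgt : ∀ n, Frob T < n → n ∈ T := by
    intro n h
    by_contra hn
    exact absurd (le_csSup bdd hn) (not_le.mpr h)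
  have hFpos : 0 < Frob T := by
    rcases Nat.eq_zero_or_pos (Frob T) with h | h
    · exact absurd hTns.1 (h ▸ hF')
    · exact h
  have hmem : Frob T ∈ {x | x ∉ T ∧ T ∪ {x} ∈ Md S d} := by
    refine ⟨hF', ?_, ?_⟩
    · refine ⟨Or.inl hTns.1, ?_, ?_⟩
      · rintro a (ha | ha) b (hb | hb)
        · exact Or.inl (hTns.2.1 a ha b hb)
        · rcases Nat.eq_zero_or_pos a with h0 | h0
          · subst h0; rw [zero_add]; exact Or.inr hb
          · simp only [Set.mem_singleton_iff] at hb
            exact Or.inl (hgt _ (by omega))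
        · rcases Nat.eq_zero_or_pos b with h0 | h0
          · subst h0; rw [add_zero]; exact Or.inr ha
          · simp only [Set.mem_singleton_iff] at ha
            exact Or.inl (hgt _ (by omega))
        · simp only [Set.mem_singleton_iff] at ha hb
          exact Or.inl (hgt _ (by omega))
      · apply hc.subset
        intro x hx
        simp only [Set.mem_compl_iff, Set.mem_union] at hx ⊢
        exact fun h => hx (Or.inl h)
    · rw [← hq]
      ext x
      simp only [quot, Set.mem_setOf_eq, Set.mem_union, Set.mem_singleton_iff]
      constructor
      · rintro (h | h)
        · exact h
        · exact absurd ⟨x, h.symm⟩ hdvd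
      · exact Or.inl
  apply le_antisymm
  · apply csSup_le ⟨_, hmem⟩
    intro x hx
    exact le_csSup bdd hx.1
  · exact le_csSup (hc.subset (fun x hx => hx.1)).bddAbove hmem
end

section
/- Let S ≠ ℕ be a numerical semigroup, d a positive integer, and T ∈ M_d(S). If x is a minimal generator of T with x ∉ d·S and x > F(T), then max{y ∈ ℕ \ (T \ {x}) : (T \ {x}) ∪ {y} ∈ M_d(S)} = x. -/
open scoped Pointwise

theorem stmt9 (S : Set ℕ) (d : ℕ) (hd : 0 < d)
    (hS : IsNumSgp S) (hSne : S ≠ Set.univ)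
    (T : Set ℕ) (hT : T ∈ Md S d)
    (x : ℕ) (hx : x ∈ msg T) (hxd : x ∉ dmul d S) (hxF : Frob T < x) :
    sSup {y | y ∉ T \ {x} ∧ (T \ {x}) ∪ {y} ∈ Md S d} = x := by
  have hxT : x ∈ T := hx.1
  have hTfin : (Tᶜ : Set ℕ).Finite := hT.1.2.2
  have hbdd : BddAbove (Tᶜ : Set ℕ) := hTfin.bddAbove
  have hmemT : ∀ n : ℕ, Frob T < n → n ∈ T := by
    intro n hn
    by_contra hnT
    exact absurd (le_csSup hbdd hnT) (not_le.mpr hn)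
  have hub : ∀ y ∈ {y | y ∉ T \ {x} ∧ (T \ {x}) ∪ {y} ∈ Md S d}, y ≤ x := by
    intro y hy
    by_contra hlt
    push_neg at hlt
    have hyT : y ∈ T := hmemT y (lt_trans hxF hlt)
    exact hy.1 ⟨hyT, fun h => absurd h (Nat.ne_of_gt hlt)⟩
  have hxmem : x ∈ {y | y ∉ T \ {x} ∧ (T \ {x}) ∪ {y} ∈ Md S d} := by
    constructor
    · intro h; exact h.2 rfl
    · have : (T \ {x}) ∪ {x} = T := by
        ext z
        simp only [Set.mem_union, Set.mem_diff, Set.mem_singleton_iff]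
        constructor
        · rintro (⟨hz, _⟩ | rfl) <;> [exact hz; exact hxT]
        · intro hz
          by_cases hzx : z = x
          · exact Or.inr hzx
          · exact Or.inl ⟨hz, hzx⟩
      rw [this]; exact hT
  exact le_antisymm (csSup_le ⟨x, hxmem⟩ hub) (le_csSup ⟨x, hub⟩ hxmem)
end

section
/- Let S ≠ ℕ be a numerical semigroup, d a positive integer, and T ∈ M_d(S). Then d divides F(T) if and only if F(T) = d·F(S). -/
open scoped Pointwise

theorem stmt10 (S : Set ℕ) (d : ℕ) (hd : 0 < d)
    (hS : IsNumSgp S) (hSne : S ≠ Set.univ)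
    (T : Set ℕ) (hT : T ∈ Md S d) :
    d ∣ Frob T ↔ Frob T = d * Frob S := by
  obtain ⟨hTns, hq⟩ := hT
  have hScne : (Sᶜ : Set ℕ).Nonempty := by
    rw [Set.nonempty_compl]; exact hSne
  -- Frobenius of S is not in S
  have hFS : Frob S ∈ (Sᶜ : Set ℕ) :=
    Nat.sSup_mem hScne hS.2.2.bddAbove
  have hFSle : ∀ x, x ∉ S → x ≤ Frob S := fun x hx =>
    le_csSup hS.2.2.bddAbove hx
  -- d * Frob S ∉ T
  have hdFS : d * Frob S ∉ T := by
    intro h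
    exact hFS (hq ▸ h : Frob S ∈ S)
  have hFTle : ∀ y, y ∉ T → y ≤ Frob T := fun y hy =>
    le_csSup hTns.2.2.bddAbove hy
  have hFT : Frob T ∈ (Tᶜ : Set ℕ) :=
    Nat.sSup_mem ⟨d * Frob S, hdFS⟩ hTns.2.2.bddAbove
  constructor
  · rintro ⟨k, hk⟩
    have hkS : k ∉ S := by
      intro hkS
      rw [← hq] at hkS
      exact hFT (hk ▸ hkS)
    have h1 : Frob T ≤ d * Frob S := by
      rw [hk]
      exact Nat.mul_le_mul_left d (hFSle k hkS)
    exact le_antisymm h1 (hFTle _ hdFS)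
  · intro h
    exact ⟨Frob S, h⟩
end

section
/- Let S ≠ ℕ be a numerical semigroup, d a positive integer, and X ⊆ ℕ. The following are equivalent: (1) X is contained in some T ∈ M_d(S); (2) ⟨X⟩ ∩ d·(ℕ \ S) = ∅; (3) (⟨X⟩ + d·S) ∩ d·(ℕ \ S) = ∅; (4) ⟨X⟩ + d·S is an intersection of elements of M_d(S). -/
open scoped Pointwise

lemma mem_of_frob_lt (S : Set ℕ) (hS : IsNumSgp S) {x : ℕ} (hx : Frob S < x) : x ∈ S := by
  by_contra h
  exact absurd (le_csSup hS.2.2.bddAbove h) (not_le.mpr hx)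

lemma key_Md (S : Set ℕ) (d : ℕ) (hd : 0 < d) (hS : IsNumSgp S)
    (M : Set ℕ) (hM0 : 0 ∈ M) (hMadd : ∀ a ∈ M, ∀ b ∈ M, a + b ∈ M)
    (hMS : dmul d S ⊆ M) (hMdis : M ∩ dmul d Sᶜ = ∅)
    (c : ℕ) (hc : d * (Frob S + 1) ≤ c) :
    (M ∪ {k | c ≤ k}) ∈ Md S d := by
  constructor
  · refine ⟨Or.inl hM0, ?_, ?_⟩
    · rintro a (ha | ha) b (hb | hb)
      · exact Or.inl (hMadd a ha b hb)
      · exact Or.inr (le_trans hb (Nat.le_add_left b a))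
      · exact Or.inr (le_trans ha (Nat.le_add_right a b))
      · exact Or.inr (le_trans hb (Nat.le_add_left b a))
    · refine Set.Finite.subset (Set.finite_Iio c) ?_
      intro k hk
      simp only [Set.mem_compl_iff, Set.mem_union, Set.mem_setOf_eq, not_or, not_le] at hk
      exact hk.2
  · ext x
    simp only [quot, Set.mem_setOf_eq, Set.mem_union]
    constructor
    · rintro (h | h)
      · by_contra hx
        have : d * x ∈ M ∩ dmul d Sᶜ := ⟨h, ⟨x, hx, rfl⟩⟩
        rw [hMdis] at this
        exact this
      · have h1 : d * (Frob S + 1) ≤ d * x := le_trans hc h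
        have h2 : Frob S + 1 ≤ x := Nat.le_of_mul_le_mul_left h1 hd
        exact mem_of_frob_lt S hS (Nat.lt_of_succ_le h2)
    · intro hx
      exact Or.inl (hMS ⟨x, hx, rfl⟩)
theorem stmt11 (S : Set ℕ) (d : ℕ) (hd : 0 < d)
    (hS : IsNumSgp S) (hSne : S ≠ Set.univ) (X : Set ℕ) :
    ((∃ T ∈ Md S d, X ⊆ T) ↔ gen X ∩ dmul d Sᶜ = ∅)
    ∧ (gen X ∩ dmul d Sᶜ = ∅ ↔ (gen X + dmul d S) ∩ dmul d Sᶜ = ∅)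
    ∧ ((gen X + dmul d S) ∩ dmul d Sᶜ = ∅ ↔
        ∃ 𝒯 : Set (Set ℕ), 𝒯.Nonempty ∧ 𝒯 ⊆ Md S d ∧ gen X + dmul d S = ⋂₀ 𝒯) := by
  set M : Set ℕ := gen X + dmul d S with hMdef
  -- basic facts about M
  have hdS0 : (0 : ℕ) ∈ dmul d S := ⟨0, hS.1, by simp⟩
  have hgen0 : (0 : ℕ) ∈ gen X := (AddSubmonoid.closure X).zero_mem
  have hM0 : (0 : ℕ) ∈ M := by
    have := Set.add_mem_add hgen0 hdS0
    simpa using this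
  have hgenM : gen X ⊆ M := by
    intro x hx
    have := Set.add_mem_add hx hdS0
    simpa using this
  have hdSM : dmul d S ⊆ M := by
    intro x hx
    have := Set.add_mem_add hgen0 hx
    simpa using this
  have hMadd : ∀ a ∈ M, ∀ b ∈ M, a + b ∈ M := by
    rintro a ha b hb
    obtain ⟨g1, hg1, y1, ⟨s1, hs1, rfl⟩, rfl⟩ := ha
    obtain ⟨g2, hg2, y2, ⟨s2, hs2, rfl⟩, rfl⟩ := hb
    have : (g1 + g2) + d * (s1 + s2) ∈ M :=
      Set.add_mem_add ((AddSubmonoid.closure X).add_mem hg1 hg2)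
        ⟨s1 + s2, hS.2.1 s1 hs1 s2 hs2, rfl⟩
    convert this using 1
    ring
  -- T ∈ Md S d is disjoint from dmul d Sᶜ and contains d·S
  have hMdDis : ∀ T ∈ Md S d, T ∩ dmul d Sᶜ = ∅ := by
    rintro T ⟨hT1, hT2⟩
    ext y
    simp only [Set.mem_inter_iff, Set.mem_empty_iff_false, iff_false, not_and]
    rintro hyT ⟨a, ha, rfl⟩
    exact ha (by rw [← hT2]; exact hyT)
  -- (2) ↔ (3)
  have e23 : gen X ∩ dmul d Sᶜ = ∅ ↔ M ∩ dmul d Sᶜ = ∅ := by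
    constructor
    · intro h2
      ext y
      simp only [Set.mem_inter_iff, Set.mem_empty_iff_false, iff_false, not_and]
      rintro hyM ⟨a, ha, rfl⟩
      obtain ⟨g, hg, y1, ⟨s, hs, rfl⟩, hsum⟩ := hyM
      have hsa : s ≤ a := by nlinarith [Nat.zero_le g]
      have hg' : g = d * (a - s) := by
        have := Nat.sub_add_cancel hsa
        nlinarith [Nat.sub_add_cancel hsa]
      have has : a - s ∉ S := by
        intro h
        have : (a - s) + s ∈ S := hS.2.1 _ h _ hs
        rw [Nat.sub_add_cancel hsa] at this
        exact ha this
      have : g ∈ gen X ∩ dmul d Sᶜ := ⟨hg, ⟨a - s, has, hg'.symm⟩⟩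
      rw [h2] at this
      exact this
    · intro h3
      ext y
      simp only [Set.mem_inter_iff, Set.mem_empty_iff_false, iff_false, not_and]
      intro hy hy'
      have : y ∈ M ∩ dmul d Sᶜ := ⟨hgenM hy, hy'⟩
      rw [h3] at this
      exact this
  -- (1) → (2)
  have e12 : (∃ T ∈ Md S d, X ⊆ T) → gen X ∩ dmul d Sᶜ = ∅ := by
    rintro ⟨T, hT, hXT⟩
    have hTdis := hMdDis T hT
    have hgenT : gen X ⊆ T := by
      have hT' : AddSubmonoid.closure X ≤
          AddSubmonoid.mk ⟨T, fun {a b} ha hb => hT.1.2.1 a ha b hb⟩ hT.1.1 :=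
        AddSubmonoid.closure_le.mpr hXT
      exact fun x hx => hT' hx
    ext y
    simp only [Set.mem_inter_iff, Set.mem_empty_iff_false, iff_false, not_and]
    intro hy hy'
    have : y ∈ T ∩ dmul d Sᶜ := ⟨hgenT hy, hy'⟩
    rw [hTdis] at this
    exact this
  -- (2) → (1)
  have e21 : gen X ∩ dmul d Sᶜ = ∅ → (∃ T ∈ Md S d, X ⊆ T) := by
    intro h2
    have h3 := e23.mp h2
    refine ⟨M ∪ {k | d * (Frob S + 1) ≤ k},
      key_Md S d hd hS M hM0 hMadd hdSM h3 _ le_rfl, ?_⟩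
    intro x hx
    exact Or.inl (hgenM (AddSubmonoid.subset_closure hx))
  -- (3) → (4)
  have e34 : M ∩ dmul d Sᶜ = ∅ →
      ∃ 𝒯 : Set (Set ℕ), 𝒯.Nonempty ∧ 𝒯 ⊆ Md S d ∧ M = ⋂₀ 𝒯 := by
    intro h3
    -- M ≠ univ
    obtain ⟨a, ha⟩ : ∃ a, a ∉ S := by
      by_contra h
      push_neg at h
      exact hSne (Set.eq_univ_iff_forall.mpr h)
    have hdaM : d * a ∉ M := by
      intro h
      have : d * a ∈ M ∩ dmul d Sᶜ := ⟨h, ⟨a, ha, rfl⟩⟩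
      rw [h3] at this
      exact this
    refine ⟨{T | ∃ n, n ∉ M ∧ T = M ∪ {k | max (d * (Frob S + 1)) (n + 1) ≤ k}}, ?_, ?_, ?_⟩
    · exact ⟨_, ⟨d * a, hdaM, rfl⟩⟩
    · rintro T ⟨n, hn, rfl⟩
      exact key_Md S d hd hS M hM0 hMadd hdSM h3 _ (le_max_left _ _)
    · ext y
      simp only [Set.mem_sInter, Set.mem_setOf_eq]
      constructor
      · intro hy T hT
        obtain ⟨n, hn, rfl⟩ := hT
        exact Or.inl hy
      · intro hy
        by_contra hyM
        have := hy _ ⟨y, hyM, rfl⟩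
        rcases this with h | h
        · exact hyM h
        · have : y + 1 ≤ y := le_trans (le_max_right _ _) h
          omega
  -- (4) → (3)
  have e43 : (∃ 𝒯 : Set (Set ℕ), 𝒯.Nonempty ∧ 𝒯 ⊆ Md S d ∧ M = ⋂₀ 𝒯) →
      M ∩ dmul d Sᶜ = ∅ := by
    rintro ⟨𝒯, ⟨T, hT⟩, h𝒯, hMeq⟩
    have hMT : M ⊆ T := by
      rw [hMeq]
      exact fun y hy => hy T hT
    have hTdis := hMdDis T (h𝒯 hT)
    ext y
    simp only [Set.mem_inter_iff, Set.mem_empty_iff_false, iff_false, not_and]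
    intro hy hy'
    have : y ∈ T ∩ dmul d Sᶜ := ⟨hMT hy, hy'⟩
    rw [hTdis] at this
    exact this
  exact ⟨⟨e12, e21⟩, e23, ⟨e34, e43⟩⟩
end

section
/- Let S ≠ ℕ be a numerical semigroup and d a positive integer. A subset T of ℕ is a numerical semigroup with T/d = S if and only if there exists a finite subset X of S such that ⟨X⟩ ∩ d·(ℕ \ S) = ∅, gcd(X ∪ {d}) = 1, and T = ⟨X⟩ + d·S. -/
open scoped Pointwise

lemma bezout_aux (Y : Finset ℕ) :
    ((Y.gcd id : ℕ) : ℤ) ∈ AddSubgroup.closure ((fun n : ℕ => (n : ℤ)) '' ↑Y) := by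
  classical
  induction Y using Finset.induction_on with
  | empty => simp
  | @insert a Y ha ih =>
    have hmem : ((a : ℤ)) ∈ AddSubgroup.closure ((fun n : ℕ => (n : ℤ)) '' ↑(insert a Y)) :=
      AddSubgroup.subset_closure ⟨a, by simp, rfl⟩
    have hmono : AddSubgroup.closure ((fun n : ℕ => (n : ℤ)) '' ↑Y) ≤
        AddSubgroup.closure ((fun n : ℕ => (n : ℤ)) '' ↑(insert a Y)) := by
      apply AddSubgroup.closure_mono
      apply Set.image_mono
      simp [Finset.coe_insert, Set.subset_insert]
    have ihm := hmono ih
    have key : (((insert a Y).gcd id : ℕ) : ℤ) =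
        (Nat.gcdA a (Y.gcd id)) * (a : ℤ) + (Nat.gcdB a (Y.gcd id)) * ((Y.gcd id : ℕ) : ℤ) := by
      rw [Finset.gcd_insert, show gcd (id a) (Y.gcd id) = Nat.gcd a (Y.gcd id) from rfl]
      have := Nat.gcd_eq_gcd_ab a (Y.gcd id)
      push_cast at this ⊢
      linarith [this]
    rw [key]
    exact add_mem (AddSubgroup.zsmul_mem _ hmem _) (AddSubgroup.zsmul_mem _ ihm _)

lemma split_aux {A : Set ℕ} {z : ℤ} (hz : z ∈ AddSubgroup.closure ((fun n : ℕ => (n : ℤ)) '' A)) :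
    ∃ p q : ℕ, p ∈ AddSubmonoid.closure A ∧ q ∈ AddSubmonoid.closure A ∧ z = (p : ℤ) - q := by
  induction hz using AddSubgroup.closure_induction with
  | mem x hx =>
    obtain ⟨n, hn, rfl⟩ := hx
    exact ⟨n, 0, AddSubmonoid.subset_closure hn, zero_mem _, by simp⟩
  | zero => exact ⟨0, 0, zero_mem _, zero_mem _, by simp⟩
  | add x y hx hy ihx ihy =>
    obtain ⟨p, q, hp, hq, rfl⟩ := ihx
    obtain ⟨p', q', hp', hq', rfl⟩ := ihy
    exact ⟨p + p', q + q', add_mem hp hp', add_mem hq hq', by push_cast; ring⟩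
  | neg x hx ihx =>
    obtain ⟨p, q, hp, hq, rfl⟩ := ihx
    exact ⟨q, p, hq, hp, by ring⟩

lemma cofinite_of_gcd_one (Y : Finset ℕ) (h : Y.gcd id = 1) :
    {n : ℕ | n ∉ AddSubmonoid.closure (↑Y : Set ℕ)}.Finite := by
  have hb := bezout_aux Y
  rw [h] at hb
  obtain ⟨p, q, hp, hq, hpq⟩ := split_aux hb
  have hpq' : p = q + 1 := by omega
  have key : ∀ n : ℕ, q * q ≤ n → n ∈ AddSubmonoid.closure (↑Y : Set ℕ) := by
    intro n hn
    rcases Nat.eq_zero_or_pos q with hq0 | hq0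
    · subst hq0
      have h1 : (1 : ℕ) ∈ AddSubmonoid.closure (↑Y : Set ℕ) := by simpa [hpq'] using hp
      have := AddSubmonoid.nsmul_mem _ h1 n
      simpa using this
    · have hr : n % q < q := Nat.mod_lt _ hq0
      have hk : q ≤ n / q := (Nat.le_div_iff_mul_le hq0).mpr (by nlinarith)
      have hrep : n = (n / q - n % q) * q + (n % q) * p := by
        have hdm := Nat.div_add_mod n q
        have : n % q ≤ n / q := le_of_lt (lt_of_lt_of_le hr hk)
        rw [hpq']
        rw [Nat.sub_mul]
        nlinarith [Nat.sub_add_cancel (Nat.mul_le_mul_right q this)]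
      rw [hrep]
      have h1 := AddSubmonoid.nsmul_mem _ hq (n / q - n % q)
      have h2 := AddSubmonoid.nsmul_mem _ hp (n % q)
      simpa [smul_eq_mul] using add_mem h1 h2
  apply Set.Finite.subset (Set.finite_Iio (q * q))
  intro n hn
  simp only [Set.mem_setOf_eq] at hn
  by_contra hlt
  exact hn (key n (by simpa [Set.mem_Iio, not_lt] using hlt))

theorem stmt12 (S : Set ℕ) (d : ℕ) (hd : 0 < d)
    (hS : IsNumSgp S) (hSne : S ≠ Set.univ) (T : Set ℕ) :
    (IsNumSgp T ∧ quot T d = S) ↔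
      ∃ X : Finset ℕ, ↑X ⊆ S ∧ gen ↑X ∩ dmul d Sᶜ = ∅ ∧
        (insert d X).gcd id = 1 ∧ T = gen ↑X + dmul d S := by
  classical
  obtain ⟨hS0, hSadd, hSfin⟩ := hS
  have hF : ∀ n, sSup (Sᶜ : Set ℕ) < n → n ∈ S := by
    intro n h
    by_contra hn
    exact absurd (le_csSup hSfin.bddAbove hn) (not_le.mpr h)
  set F := sSup (Sᶜ : Set ℕ) with hFdef
  constructor
  · rintro ⟨⟨hT0, hTadd, hTfin⟩, hq⟩
    set Tsub : AddSubmonoid ℕ :=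
      { carrier := T, zero_mem' := hT0, add_mem' := fun ha hb => hTadd _ ha _ hb } with hTsub
    have hTS : T ⊆ S := by
      intro t ht
      have hdt : d * t ∈ T := by
        have := AddSubmonoid.nsmul_mem Tsub (show t ∈ Tsub from ht) d
        simpa [smul_eq_mul] using (show d • t ∈ T from this)
      have : t ∈ quot T d := hdt
      rwa [hq] at this
    have hG : ∀ n, sSup (Tᶜ : Set ℕ) < n → n ∈ T := by
      intro n h
      by_contra hn
      exact absurd (le_csSup hTfin.bddAbove hn) (not_le.mpr h)
    set G := sSup (Tᶜ : Set ℕ) with hGdef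
    obtain ⟨C, hCdef⟩ : ∃ c, c = G + d * F + 2 * d := ⟨_, rfl⟩
    have hCge : G + 2 ≤ C := by rw [hCdef]; nlinarith [Nat.zero_le (d * F)]
    set X : Finset ℕ := (Finset.range (C + 1)).filter (fun n => n ∈ T) with hXdef
    have hXmem : ∀ n, n ∈ X ↔ n ≤ C ∧ n ∈ T := by
      intro n
      simp [hXdef, Finset.mem_filter, Finset.mem_range, Nat.lt_succ_iff]
    have hgenT : gen ↑X ⊆ T := by
      intro a ha
      have hle : AddSubmonoid.closure (↑X : Set ℕ) ≤ Tsub :=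
        AddSubmonoid.closure_le.mpr (fun x hx => ((hXmem x).mp (Finset.mem_coe.mp hx)).2)
      exact hle ha
    refine ⟨X, ?_, ?_, ?_, ?_⟩
    · intro x hx
      exact hTS ((hXmem x).mp (Finset.mem_coe.mp hx)).2
    · apply Set.eq_empty_iff_forall_notMem.mpr
      rintro a ⟨hagen, m, hm, rfl⟩
      have h1 : d * m ∈ T := hgenT hagen
      have h2 : m ∈ quot T d := h1
      rw [hq] at h2
      exact hm h2
    · have h1X : G + 1 ∈ X := (hXmem _).mpr ⟨by omega, hG _ (by omega)⟩
      have h2X : G + 2 ∈ X := (hXmem _).mpr ⟨by omega, hG _ (by omega)⟩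
      have hg1 : (insert d X).gcd id ∣ G + 1 :=
        Finset.gcd_dvd (Finset.mem_insert_of_mem h1X)
      have hg2 : (insert d X).gcd id ∣ G + 2 :=
        Finset.gcd_dvd (Finset.mem_insert_of_mem h2X)
      have : (insert d X).gcd id ∣ 1 := by
        simpa using Nat.dvd_sub hg2 hg1
      exact Nat.dvd_one.mp this
    · ext t
      constructor
      · intro ht
        by_cases hC : t ≤ C
        · exact Set.mem_add.mpr ⟨t, AddSubmonoid.subset_closure
            (Finset.mem_coe.mpr ((hXmem t).mpr ⟨hC, ht⟩)),
            0, ⟨0, hS0, mul_zero d⟩, add_zero t⟩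
        · push_neg at hC
          set s := (t - (G + 1)) / d with hsdef
          set r := (t - (G + 1)) % d with hrdef
          have hdm : d * s + r = t - (G + 1) := Nat.div_add_mod (t - (G + 1)) d
          have hrd : r < d := Nat.mod_lt _ hd
          have hxC : G + 1 + r ≤ C := by rw [hCdef]; nlinarith [Nat.zero_le (d * F)]
          have hxT : G + 1 + r ∈ T := hG _ (by omega)
          have hsF : F < s := by
            have h1 : (F + 1) * d ≤ t - (G + 1) := by
              have h2 : G + 1 + ((F + 1) * d) ≤ t := by
                have : (F + 1) * d = d * F + d := by ring
                rw [this]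
                have := hCdef
                omega
              omega
            have := (Nat.le_div_iff_mul_le hd).mpr h1
            omega
          have heq : (G + 1 + r) + d * s = t := by
            have h7 : G + 1 ≤ t := by omega
            revert hdm
            generalize d * s = w
            intro hdm
            omega
          exact Set.mem_add.mpr ⟨G + 1 + r, AddSubmonoid.subset_closure
            (Finset.mem_coe.mpr ((hXmem _).mpr ⟨hxC, hxT⟩)),
            d * s, ⟨s, hF s hsF, rfl⟩, heq⟩
      · intro ht
        obtain ⟨a, ha, b, ⟨s', hs', rfl⟩, hab⟩ := Set.mem_add.mp ht
        have h1 : d * s' ∈ T := by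
          have : s' ∈ quot T d := by rw [hq]; exact hs'
          exact this
        rw [← hab]
        exact hTadd _ (hgenT ha) _ h1
  · rintro ⟨X, hXS, hdis, hgcd, rfl⟩
    have h0T : (0 : ℕ) ∈ gen ↑X + dmul d S :=
      Set.mem_add.mpr ⟨0, zero_mem _, 0, ⟨0, hS0, mul_zero d⟩, add_zero 0⟩
    have haddT : ∀ a ∈ gen ↑X + dmul d S, ∀ b ∈ gen ↑X + dmul d S,
        a + b ∈ gen ↑X + dmul d S := by
      intro a ha b hb
      obtain ⟨a1, ha1, a2, ⟨sa, hsa, rfl⟩, rfl⟩ := Set.mem_add.mp ha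
      obtain ⟨b1, hb1, b2, ⟨sb, hsb, rfl⟩, rfl⟩ := Set.mem_add.mp hb
      exact Set.mem_add.mpr ⟨a1 + b1, add_mem ha1 hb1, d * (sa + sb),
        ⟨sa + sb, hSadd _ hsa _ hsb, rfl⟩, by ring⟩
    have hquot : quot (gen ↑X + dmul d S) d = S := by
      ext x
      simp only [quot, Set.mem_setOf_eq]
      constructor
      · intro hx
        obtain ⟨a, ha, b, ⟨s, hsS, rfl⟩, hab⟩ := Set.mem_add.mp hx
        have hds : d * s ≤ d * x := le_of_add_le_right (le_of_eq hab)
        have hsx : s ≤ x := Nat.le_of_mul_le_mul_left hds hd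
        have haeq : a = d * (x - s) := by
          rw [Nat.mul_sub]
          exact Nat.eq_sub_of_add_eq hab
        have hxs : x - s ∈ S := by
          by_contra hns
          have hmem : a ∈ gen ↑X ∩ dmul d Sᶜ := ⟨ha, ⟨x - s, hns, haeq.symm⟩⟩
          rw [hdis] at hmem
          exact hmem
        have := hSadd _ hxs _ hsS
        rwa [Nat.sub_add_cancel hsx] at this
      · intro hx
        exact Set.mem_add.mpr ⟨0, zero_mem _, d * x, ⟨x, hx, rfl⟩, zero_add _⟩
    refine ⟨⟨h0T, haddT, ?_⟩, hquot⟩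
    -- finiteness of complement
    set Y : Finset ℕ := insert (d * (F + 1)) (insert (d * (F + 2)) X) with hYdef
    have hYgcd : Y.gcd id = 1 := by
      have h1 : Y.gcd id ∣ d * (F + 1) := Finset.gcd_dvd (by simp [hYdef])
      have h2 : Y.gcd id ∣ d * (F + 2) := Finset.gcd_dvd (by simp [hYdef])
      have hdd : Y.gcd id ∣ d := by
        have hsub : d * (F + 2) - d * (F + 1) = d := by
          rw [← Nat.mul_sub]
          simp
        have := Nat.dvd_sub h2 h1
        rwa [hsub] at this
      have hdiv1 : Y.gcd id ∣ (insert d X).gcd id := by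
        apply Finset.dvd_gcd
        intro b hb
        rcases Finset.mem_insert.mp hb with rfl | hbX
        · exact hdd
        · exact Finset.gcd_dvd (by simp [hYdef, hbX])
      rw [hgcd] at hdiv1
      exact Nat.dvd_one.mp hdiv1
    have hsubY : (AddSubmonoid.closure (↑Y : Set ℕ) : Set ℕ) ⊆ gen ↑X + dmul d S := by
      intro a ha
      set Tsub : AddSubmonoid ℕ :=
        { carrier := gen ↑X + dmul d S, zero_mem' := h0T,
          add_mem' := fun hx hy => haddT _ hx _ hy } with hTsub
      have hle : AddSubmonoid.closure (↑Y : Set ℕ) ≤ Tsub := by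
        apply AddSubmonoid.closure_le.mpr
        intro y hy
        simp only [hYdef, Finset.coe_insert, Set.mem_insert_iff, Finset.mem_coe] at hy
        rcases hy with rfl | rfl | hyX
        · exact Set.mem_add.mpr ⟨0, zero_mem _, d * (F + 1),
            ⟨F + 1, hF _ (by omega), rfl⟩, zero_add _⟩
        · exact Set.mem_add.mpr ⟨0, zero_mem _, d * (F + 2),
            ⟨F + 2, hF _ (by omega), rfl⟩, zero_add _⟩
        · exact Set.mem_add.mpr ⟨y, AddSubmonoid.subset_closure hyX,
            0, ⟨0, hS0, mul_zero d⟩, add_zero y⟩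
      exact hle ha
    apply Set.Finite.subset (cofinite_of_gcd_one Y hYgcd)
    intro n hn
    simp only [Set.mem_compl_iff] at hn
    simp only [Set.mem_setOf_eq]
    exact fun hmem => hn (hsubY hmem)
end

section
/- Let S ≠ ℕ be a numerical semigroup and d a positive integer. If M is a submonoid of ℕ that is an intersection of elements of M_d(S), then X = msg(M) \ d·msg(S) satisfies M = ⟨X⟩ + d·S, and X ⊆ Y for every Y ⊆ ℕ with M = ⟨Y⟩ + d·S. -/
open scoped Pointwise

lemma gen_subset {X P : Set ℕ} (h0 : 0 ∈ P) (hadd : ∀ a ∈ P, ∀ b ∈ P, a + b ∈ P)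
    (hXP : X ⊆ P) : gen X ⊆ P := by
  intro x hx
  have : AddSubmonoid.closure X ≤
      { carrier := P, zero_mem' := h0, add_mem' := fun ha hb => hadd _ ha _ hb } :=
    AddSubmonoid.closure_le.mpr hXP
  exact this hx

lemma gen_decomp_aux {Y : Set ℕ} {g : ℕ} (hg : g ∈ gen Y) :
    g = 0 ∨ ∃ y ∈ Y, y ≠ 0 ∧ ∃ g' ∈ gen Y, g = y + g' := by
  induction hg using AddSubmonoid.closure_induction with
  | mem x hx =>
    rcases eq_or_ne x 0 with rfl | hx0
    · exact Or.inl rfl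
    · exact Or.inr ⟨x, hx, hx0, 0, AddSubmonoid.zero_mem _, (add_zero x).symm⟩
  | zero => exact Or.inl rfl
  | add a b ha hb iha ihb =>
    rcases iha with rfl | ⟨y, hy, hy0, a', ha', rfl⟩
    · simpa using ihb
    · exact Or.inr ⟨y, hy, hy0, a' + b, AddSubmonoid.add_mem _ ha' hb, (add_assoc _ _ _)⟩

lemma gen_decomp {Y : Set ℕ} {g : ℕ} (hg : g ∈ gen Y) (hg0 : g ≠ 0) :
    ∃ y ∈ Y, y ≠ 0 ∧ ∃ g' ∈ gen Y, g = y + g' := (gen_decomp_aux hg).resolve_left hg0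

lemma mem_gen_msg {M : Set ℕ} : ∀ m, m ∈ M → m ∈ gen (msg M) := by
  intro m
  induction m using Nat.strong_induction_on with
  | _ m ih =>
    intro hm
    rcases eq_or_ne m 0 with rfl | hm0
    · exact AddSubmonoid.zero_mem _
    by_cases hmsg : m ∈ msg M
    · exact AddSubmonoid.subset_closure hmsg
    · have : ∃ a ∈ M, ∃ b ∈ M, a ≠ 0 ∧ b ≠ 0 ∧ a + b = m := by
        simp only [msg, Set.mem_setOf_eq] at hmsg
        push_neg at hmsg
        obtain ⟨a, ha, b, hb, ha0, hb0, hab⟩ := hmsg hm hm0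
        exact ⟨a, ha, b, hb, ha0, hb0, hab⟩
      obtain ⟨a, ha, b, hb, ha0, hb0, rfl⟩ := this
      exact AddSubmonoid.add_mem _ (ih a (by omega) ha) (ih b (by omega) hb)

theorem stmt13 (S : Set ℕ) (d : ℕ) (hd : 0 < d)
    (hS : IsNumSgp S) (hSne : S ≠ Set.univ) (M : Set ℕ)
    (hM : ∃ 𝒯 : Set (Set ℕ), 𝒯.Nonempty ∧ 𝒯 ⊆ Md S d ∧ M = ⋂₀ 𝒯) :
    M = gen (msg M \ dmul d (msg S)) + dmul d S ∧
      ∀ Y : Set ℕ, M = gen Y + dmul d S → msg M \ dmul d (msg S) ⊆ Y := by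
  obtain ⟨𝒯, ⟨T0, hT0⟩, h𝒯, rfl⟩ := hM
  set M := ⋂₀ 𝒯 with hMdef
  -- basic structure of M
  have h0M : (0 : ℕ) ∈ M := fun T hT => (h𝒯 hT).1.1
  have haddM : ∀ a ∈ M, ∀ b ∈ M, a + b ∈ M := fun a ha b hb T hT =>
    (h𝒯 hT).1.2.1 a (ha T hT) b (hb T hT)
  have hdS : dmul d S ⊆ M := by
    rintro _ ⟨s, hs, rfl⟩ T hT
    have hq : quot T d = S := (h𝒯 hT).2
    have : s ∈ quot T d := hq ▸ hs
    exact this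
  set X := msg M \ dmul d (msg S) with hX
  -- the RHS is a submonoid-closed set
  have h0R : (0 : ℕ) ∈ gen X + dmul d S := by
    have h00 : (0 : ℕ) = 0 + d * 0 := by ring
    rw [h00]
    exact Set.add_mem_add (AddSubmonoid.zero_mem _) ⟨0, hS.1, rfl⟩
  have haddR : ∀ a ∈ gen X + dmul d S, ∀ b ∈ gen X + dmul d S,
      a + b ∈ gen X + dmul d S := by
    rintro _ ⟨g1, hg1, _, ⟨s1, hs1, rfl⟩, rfl⟩ _ ⟨g2, hg2, _, ⟨s2, hs2, rfl⟩, rfl⟩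
    have : g1 + d * s1 + (g2 + d * s2) = (g1 + g2) + d * (s1 + s2) := by ring
    rw [this]
    exact Set.add_mem_add (AddSubmonoid.add_mem _ hg1 hg2)
      ⟨s1 + s2, hS.2.1 s1 hs1 s2 hs2, rfl⟩
  have hsub : ∀ m ∈ M, m ∈ gen X + dmul d S := by
    intro m hm
    refine gen_subset h0R haddR ?_ (mem_gen_msg m hm)
    intro x hx
    by_cases hxd : x ∈ dmul d (msg S)
    · obtain ⟨s, hs, rfl⟩ := hxd
      exact ⟨0, AddSubmonoid.zero_mem _, d * s, ⟨s, hs.1, rfl⟩, by ring⟩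
    · exact ⟨x, AddSubmonoid.subset_closure ⟨hx, hxd⟩, d * 0, ⟨0, hS.1, rfl⟩, by ring⟩
  have hsup : gen X + dmul d S ⊆ M := by
    rintro _ ⟨g, hg, e, he, rfl⟩
    refine haddM g ?_ e (hdS he)
    refine gen_subset h0M haddM ?_ hg
    intro x hx
    exact hx.1.1
  have hMeq : M = gen X + dmul d S := Set.Subset.antisymm hsub hsup
  refine ⟨hMeq, ?_⟩
  -- minimality
  intro Y hY
  intro x hx
  obtain ⟨hxmsg, hxd⟩ := hx
  obtain ⟨hxM, hx0, hxirr⟩ := hxmsg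
  have hYM : Y ⊆ M := by
    intro y hy
    rw [hY]
    exact ⟨y, AddSubmonoid.subset_closure hy, d * 0, ⟨0, hS.1, rfl⟩, by ring⟩
  have hgenYM : gen Y ⊆ M := gen_subset h0M haddM hYM
  -- x ∈ gen Y + dS
  have hxR : x ∈ gen Y + dmul d S := hY ▸ hxM
  obtain ⟨g, hg, _, ⟨s, hs, rfl⟩, hgs⟩ := hxR
  -- case on s = 0
  rcases eq_or_ne s 0 with rfl | hs0
  · -- x = g ∈ gen Y, g ≠ 0
    have hgx : g = x := by simpa using hgs
    subst hgx
    obtain ⟨y, hy, hy0, g', hg', rfl⟩ := gen_decomp hg hx0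
    rcases eq_or_ne g' 0 with rfl | hg'0
    · simpa using hy
    · exact absurd rfl (hxirr y (hYM hy) g' (hgenYM hg') hy0 hg'0)
  · -- d * s ≠ 0
    rcases eq_or_ne g 0 with rfl | hg0
    · -- x = d * s, s ∈ S nonzero, s ∉ msg S
      have hxs : x = d * s := by simpa using hgs.symm
      have hsmsg : s ∉ msg S := fun h => hxd ⟨s, h, hxs.symm⟩
      simp only [msg, Set.mem_setOf_eq] at hsmsg
      push_neg at hsmsg
      obtain ⟨a, ha, b, hb, ha0, hb0, hab⟩ := hsmsg hs hs0
      have hda : d * a ∈ M := hdS ⟨a, ha, rfl⟩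
      have hdb : d * b ∈ M := hdS ⟨b, hb, rfl⟩
      exact absurd (by rw [hxs, ← hab]; ring)
        (hxirr (d * a) hda (d * b) hdb (Nat.mul_ne_zero hd.ne' ha0)
          (Nat.mul_ne_zero hd.ne' hb0))
    · exact absurd hgs (hxirr g (hgenYM hg) (d * s) (hdS ⟨s, hs, rfl⟩)
        hg0 (Nat.mul_ne_zero hd.ne' hs0))
end

section
/- Let S be a numerical semigroup, d a positive integer, and x ∈ S with gcd(x,d) = 1 and x ∉ d·S. If T = ⟨x⟩ + d·S (which is a numerical semigroup with T/d = S), then F(T) = (d−1)·x + d·F(S). -/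
open scoped Pointwise

theorem stmt14 (S : Set ℕ) (d x : ℕ) (hd : 0 < d)
    (hS : IsNumSgp S) (hSne : S ≠ Set.univ)
    (hx : x ∈ S) (hg : Nat.gcd x d = 1) (hxd : x ∉ dmul d S)
    (T : Set ℕ) (hT : T = gen {x} + dmul d S) :
    Frob T = (d - 1) * x + d * Frob S := by
  classical
  -- d ≥ 2
  have hd2 : 2 ≤ d := by
    rcases Nat.lt_or_ge d 2 with h | h
    · interval_cases d
      · exact absurd ⟨x, hx, one_mul x⟩ hxd
    · exact h
  haveI : NeZero d := ⟨by omega⟩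
  -- Frobenius facts for S
  have hScne : (Sᶜ : Set ℕ).Nonempty := by
    rw [Set.nonempty_compl]; exact hSne
  have hSbdd : BddAbove (Sᶜ : Set ℕ) := hS.2.2.bddAbove
  have hFS_not : Frob S ∉ S := Nat.sSup_mem hScne hSbdd
  have hFS_ub : ∀ m, m ∉ S → m ≤ Frob S := fun m hm => le_csSup hSbdd hm
  -- multiples of x are in S
  have hmul : ∀ m : ℕ, m * x ∈ S := by
    intro m; induction m with
    | zero => simpa using hS.1
    | succ n ih =>
      have := hS.2.1 _ ih _ hx
      simpa [Nat.succ_mul] using this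
  -- membership characterization of T
  have hmemT : ∀ n, n ∈ T ↔ ∃ k s, s ∈ S ∧ n = k * x + d * s := by
    intro n
    rw [hT]
    constructor
    · rintro ⟨a, ha, b, hb, rfl⟩
      rcases AddSubmonoid.mem_closure_singleton.1 ha with ⟨k, rfl⟩
      rcases hb with ⟨s, hs, rfl⟩
      exact ⟨k, s, hs, by rw [smul_eq_mul]⟩
    · rintro ⟨k, s, hs, rfl⟩
      exact ⟨k * x, AddSubmonoid.mem_closure_singleton.2 ⟨k, by rw [smul_eq_mul]⟩,
        d * s, ⟨s, hs, rfl⟩, rfl⟩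
  have hxu : IsUnit (x : ZMod d) := (ZMod.isUnit_iff_coprime x d).2 hg
  set N := (d - 1) * x + d * Frob S with hN
  -- N ∉ T
  have hNnot : N ∉ T := by
    rw [hmemT]
    rintro ⟨k, s, hs, hEq⟩
    -- mod d analysis
    have hz : ((d - 1 : ℕ) : ZMod d) * (x : ZMod d) = (k : ZMod d) * (x : ZMod d) := by
      have hEq2 : (d - 1) * x + d * Frob S = k * x + d * s := by rw [← hN]; exact hEq
      have := congrArg (fun m : ℕ => (m : ZMod d)) hEq2
      push_cast at this
      simpa [ZMod.natCast_self] using this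
    have hz' : (x : ZMod d) * ((d - 1 : ℕ) : ZMod d) = (x : ZMod d) * (k : ZMod d) := by
      rw [mul_comm, hz, mul_comm]
    have hk : (d - 1 : ℕ) % d = k % d :=
      (ZMod.natCast_eq_natCast_iff' _ _ _).1 (hxu.mul_left_cancel hz')
    have hkd : k % d = d - 1 := by
      rw [← hk, Nat.mod_eq_of_lt (by omega)]
    have hdm := Nat.div_add_mod k d
    set q := k / d with hq
    have hkeq : k = d * q + (d - 1) := by omega
    rw [hkeq] at hEq
    have hFeq : Frob S = q * x + s := by
      have : (d * q + (d - 1)) * x = d * (q * x) + (d - 1) * x := by ring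
      rw [this] at hEq
      have : d * Frob S = d * (q * x + s) := by
        have h3 : d * Frob S = d * (q * x) + d * s := by omega
        rw [h3]; ring
      exact Nat.eq_of_mul_eq_mul_left (by omega) this
    exact hFS_not (hFeq ▸ hS.2.1 _ (hmul q) _ hs)
  -- every n > N is in T
  have hbig : ∀ n, N < n → n ∈ T := by
    intro n hn
    set k := ((n : ZMod d) * (x : ZMod d)⁻¹).val with hkdef
    have hklt : k < d := ZMod.val_lt _
    have hkx : ((k * x : ℕ) : ZMod d) = (n : ZMod d) := by
      push_cast
      rw [hkdef, ZMod.natCast_val, ZMod.cast_id, mul_assoc,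
        ZMod.inv_mul_of_unit _ hxu, mul_one]
    have hle : k * x ≤ n := by
      have h1 : k * x ≤ (d - 1) * x := Nat.mul_le_mul_right x (by omega)
      omega
    have hdvd : d ∣ n - k * x := by
      have : ((n - k * x : ℕ) : ZMod d) = 0 := by
        rw [Nat.cast_sub hle, hkx, sub_self]
      exact (ZMod.natCast_eq_zero_iff _ _).1 this
    set s := (n - k * x) / d with hsdef
    have hds : d * s = n - k * x := Nat.mul_div_cancel' hdvd
    have hkxle : k * x ≤ (d - 1) * x := Nat.mul_le_mul_right x (by omega)
    have hsS : s ∈ S := by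
      by_contra hns
      have := hFS_ub s hns
      have : d * s ≤ d * Frob S := Nat.mul_le_mul_left d this
      omega
    exact (hmemT n).2 ⟨k, s, hsS, by omega⟩
  -- conclude
  have hub : ∀ m ∈ (Tᶜ : Set ℕ), m ≤ N := by
    intro m hm
    by_contra h
    exact hm (hbig m (by omega))
  exact le_antisymm (csSup_le ⟨N, hNnot⟩ hub) (le_csSup ⟨N, hub⟩ hNnot)
end

section
/- Let S be a numerical semigroup, d a positive integer, and x ∈ S with gcd(x,d) = 1 and x ∉ d·S. If T = ⟨x⟩ + d·S, then g(T) = (d−1)(x−1)/2 + d·g(S), where g denotes the genus (number of gaps). -/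
open scoped Pointwise

lemma sum_div_gauss (d x : ℕ) (hd : 0 < d) (hg : Nat.gcd x d = 1) :
    ∑ k ∈ Finset.range d, k * x / d = (d - 1) * (x - 1) / 2 := by
  have key : ∀ k, 0 < k → k < d → k * x / d + (d - k) * x / d = x - 1 := by
    intro k hk hkd
    have hd2 : 2 ≤ d := by omega
    have hcop : Nat.Coprime d x := Nat.Coprime.symm hg
    have hxpos : 0 < x := by
      rcases Nat.eq_zero_or_pos x with h | h
      · subst h; simp [Nat.gcd_comm] at hg; omega
      · exact h
    set a := k * x / d with ha
    set b := (d - k) * x / d with hb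
    set r := k * x % d with hr
    set s := (d - k) * x % d with hs
    have hr0 : 0 < r := by
      rcases Nat.eq_zero_or_pos r with h | h
      · exfalso
        have hdvd : d ∣ k * x := Nat.dvd_of_mod_eq_zero h
        have : d ∣ k := (Nat.Coprime.dvd_of_dvd_mul_right hcop) hdvd
        have := Nat.le_of_dvd hk this
        omega
      · exact h
    have hs0 : 0 < s := by
      rcases Nat.eq_zero_or_pos s with h | h
      · exfalso
        have hdvd : d ∣ (d - k) * x := Nat.dvd_of_mod_eq_zero h
        have : d ∣ (d - k) := (Nat.Coprime.dvd_of_dvd_mul_right hcop) hdvd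
        have := Nat.le_of_dvd (by omega) this
        omega
      · exact h
    have hrd : r < d := Nat.mod_lt _ hd
    have hsd : s < d := Nat.mod_lt _ hd
    have h1 : d * a + r = k * x := Nat.div_add_mod _ _
    have h2 : d * b + s = (d - k) * x := Nat.div_add_mod _ _
    have h3 : k * x + (d - k) * x = d * x := by
      have : k + (d - k) = d := by omega
      rw [← Nat.add_mul, this]
    have hdvdrs : d ∣ r + s := by
      have hmod : r + s ≡ 0 [MOD d] := by
        calc r + s ≡ k * x + (d - k) * x [MOD d] :=
              Nat.ModEq.add (Nat.mod_modEq _ _) (Nat.mod_modEq _ _)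
          _ = d * x := h3
          _ ≡ 0 [MOD d] := (Nat.modEq_zero_iff_dvd).mpr (dvd_mul_right d x)
      exact (Nat.modEq_zero_iff_dvd).mp hmod
    have hrs : r + s = d := Nat.eq_of_dvd_of_lt_two_mul (by omega) hdvdrs (by omega)
    have h4 : d * (a + b + 1) = d * x := by
      have : d * a + r + (d * b + s) = k * x + (d - k) * x := by rw [h1, h2]
      rw [h3] at this
      nlinarith [this, hrs]
    have := Nat.eq_of_mul_eq_mul_left hd h4
    omega
  rw [Finset.sum_range_eq_add_Ico _ hd]
  simp only [Nat.zero_mul, Nat.zero_div, zero_add]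
  have hrefl : ∑ k ∈ Finset.Ico 1 d, (d - k) * x / d = ∑ k ∈ Finset.Ico 1 d, k * x / d := by
    apply Finset.sum_nbij' (fun k => d - k) (fun k => d - k)
    · intro a ha; simp only [Finset.mem_Ico] at *; omega
    · intro a ha; simp only [Finset.mem_Ico] at *; omega
    · intro a ha; simp only [Finset.mem_Ico] at ha; omega
    · intro a ha; simp only [Finset.mem_Ico] at ha; omega
    · intro a ha; rfl
  have hsum : (∑ k ∈ Finset.Ico 1 d, k * x / d) + (∑ k ∈ Finset.Ico 1 d, (d - k) * x / d)
      = ∑ k ∈ Finset.Ico 1 d, (x - 1) := by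
    rw [← Finset.sum_add_distrib]
    apply Finset.sum_congr rfl
    intro k hk
    simp only [Finset.mem_Ico] at hk
    exact key k hk.1 hk.2
  rw [hrefl, Finset.sum_const, Nat.card_Ico, smul_eq_mul] at hsum
  set t := (d - 1) * (x - 1) with ht
  omega

theorem stmt15 (S : Set ℕ) (d x : ℕ) (hd : 0 < d)
    (hS : IsNumSgp S)
    (hx : x ∈ S) (hg : Nat.gcd x d = 1) (hxd : x ∉ dmul d S)
    (T : Set ℕ) (hT : T = gen {x} + dmul d S) :
    (Tᶜ : Set ℕ).ncard = (d - 1) * (x - 1) / 2 + d * (Sᶜ : Set ℕ).ncard := by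
  classical
  obtain ⟨hS0, hSadd, hSfin⟩ := hS
  -- S is closed under adding multiples of x
  have hmulS : ∀ m ∈ S, ∀ q : ℕ, m + q * x ∈ S := by
    intro m hm q
    induction q with
    | zero => simpa using hm
    | succ q ih =>
      have h := hSadd _ ih _ hx
      have he : m + (q + 1) * x = m + q * x + x := by ring
      rw [he]; exact h
  -- membership in T
  have hmem : ∀ n, n ∈ T ↔ ∃ k, k < d ∧ ∃ m ∈ S, n = k * x + d * m := by
    intro n
    constructor
    · intro hn
      rw [hT] at hn
      obtain ⟨a, ha, b, hb, hab⟩ := Set.mem_add.mp hn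
      obtain ⟨k, hk⟩ := AddSubmonoid.mem_closure_singleton.mp ha
      obtain ⟨m, hm, hbm⟩ := hb
      obtain ⟨q, r, hrd, rfl⟩ : ∃ q r, r < d ∧ k = d * q + r :=
        ⟨k / d, k % d, Nat.mod_lt _ hd, (Nat.div_add_mod k d).symm⟩
      refine ⟨r, hrd, m + q * x, hmulS m hm q, ?_⟩
      simp only [nsmul_eq_mul, Nat.cast_id] at hk
      rw [← hab, ← hk, ← hbm]
      ring
    · rintro ⟨k, hk, m, hm, rfl⟩
      rw [hT]
      exact Set.add_mem_add (AddSubmonoid.mem_closure_singleton.mpr ⟨k, by simp [nsmul_eq_mul]⟩)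
        ⟨m, hm, rfl⟩
  -- injectivity of k ↦ k*x % d on [0,d)
  have hgd : Nat.gcd d x = 1 := by rwa [Nat.gcd_comm] at hg
  have hkinj : ∀ k k', k < d → k' < d → k * x % d = k' * x % d → k = k' := by
    intro k k' hk hk' h
    have hmeq : k ≡ k' [MOD d] := Nat.ModEq.cancel_right_of_coprime hgd h
    have := hmeq
    unfold Nat.ModEq at this
    rwa [Nat.mod_eq_of_lt hk, Nat.mod_eq_of_lt hk'] at this
  -- surjectivity of k ↦ k*x % d onto residues
  have hksurj : ∀ n : ℕ, ∃ k, k < d ∧ k * x % d = n % d := by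
    intro n
    rcases eq_or_lt_of_le (Nat.one_le_iff_ne_zero.mpr (Nat.pos_iff_ne_zero.mp hd)) with h1 | h1
    · refine ⟨0, hd, ?_⟩
      rw [← h1]
      simp [Nat.mod_one]
    · obtain ⟨u, -, hu⟩ := Nat.exists_mul_mod_eq_one_of_coprime hg h1
      refine ⟨n * u % d, Nat.mod_lt _ hd, ?_⟩
      have h2 : (n * u % d) * x ≡ (n * u) * x [MOD d] :=
        (Nat.mod_modEq (n * u) d).mul_right x
      have h3 : (n * u) * x = n * (x * u) := by ring
      have h4 : x * u ≡ 1 [MOD d] := by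
        unfold Nat.ModEq
        rw [hu, Nat.mod_eq_of_lt h1]
      have h5 : n * (x * u) ≡ n * 1 [MOD d] := h4.mul_left n
      have h6 : (n * u % d) * x ≡ n [MOD d] := by
        calc (n * u % d) * x ≡ (n * u) * x [MOD d] := h2
          _ = n * (x * u) := h3
          _ ≡ n * 1 [MOD d] := h5
          _ = n := by ring
      exact h6
  -- the finsets
  set G : Finset ℕ := hSfin.toFinset with hGdef
  have hGmem : ∀ m, m ∈ G ↔ m ∉ S := by intro m; simp [hGdef]
  set L : ℕ → Finset ℕ := fun k => (Finset.range (k * x / d)).image (fun j => k * x % d + d * j)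
    with hLdef
  set H : ℕ → Finset ℕ := fun k => G.image (fun m => k * x + d * m) with hHdef
  set F : Finset ℕ := (Finset.range d).biUnion (fun k => L k ∪ H k) with hFdef
  -- membership in L k
  have hLmem : ∀ k n, n ∈ L k ↔ ∃ j, j < k * x / d ∧ n = k * x % d + d * j := by
    intro k n
    simp only [hLdef, Finset.mem_image, Finset.mem_range]
    constructor
    · rintro ⟨j, hj, rfl⟩; exact ⟨j, hj, rfl⟩
    · rintro ⟨j, hj, rfl⟩; exact ⟨j, hj, rfl⟩
  have hHmem : ∀ k n, n ∈ H k ↔ ∃ m, m ∉ S ∧ n = k * x + d * m := by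
    intro k n
    simp only [hHdef, Finset.mem_image]
    constructor
    · rintro ⟨m, hm, rfl⟩; exact ⟨m, (hGmem m).mp hm, rfl⟩
    · rintro ⟨m, hm, rfl⟩; exact ⟨m, (hGmem m).mpr hm, rfl⟩
  -- elements of L k are < k*x and ≡ k*x mod d
  have hLprop : ∀ k n, n ∈ L k → n % d = k * x % d ∧ n < k * x := by
    intro k n hn
    obtain ⟨j, hj, rfl⟩ := (hLmem k n).mp hn
    constructor
    · simp [Nat.add_mul_mod_self_left, Nat.mod_mod_of_dvd]
    · have h1 : d * j + d ≤ d * (k * x / d) := by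
        have := Nat.mul_le_mul_left d (Nat.succ_le_of_lt hj)
        rwa [Nat.mul_succ] at this
      have h2 : d * (k * x / d) + k * x % d = k * x := Nat.div_add_mod _ _
      omega
  have hHprop : ∀ k n, n ∈ H k → n % d = k * x % d ∧ k * x ≤ n := by
    intro k n hn
    obtain ⟨m, hm, rfl⟩ := (hHmem k n).mp hn
    exact ⟨by simp [Nat.add_mul_mod_self_left], Nat.le_add_right _ _⟩
  -- L k ∪ H k consists of gaps of T (for k < d)
  have hGap : ∀ k, k < d → ∀ n, n ∈ L k ∪ H k → n ∉ T := by
    intro k hk n hn hnT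
    obtain ⟨k', hk', m', hm', rfl⟩ := (hmem n).mp hnT
    have hmod : (k' * x + d * m') % d = k' * x % d := by simp [Nat.add_mul_mod_self_left]
    rcases Finset.mem_union.mp hn with h | h
    · obtain ⟨hmodn, hlt⟩ := hLprop k _ h
      have : k = k' := hkinj k k' hk hk' (by omega)
      subst this
      omega
    · obtain ⟨m, hm, heq⟩ := (hHmem k _).mp h
      have hmodn : (k' * x + d * m') % d = k * x % d := by
        rw [heq]; simp [Nat.add_mul_mod_self_left]
      have : k = k' := hkinj k k' hk hk' (by omega)
      subst this
      have hdm : d * m = d * m' := by omega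
      have : m = m' := Nat.eq_of_mul_eq_mul_left hd hdm
      exact hm (this ▸ hm')
  -- Tᶜ = F
  have hTc : (Tᶜ : Set ℕ) = ↑F := by
    ext n
    simp only [Set.mem_compl_iff, Finset.mem_coe, hFdef, Finset.mem_biUnion, Finset.mem_range,
      Finset.mem_union]
    constructor
    · intro hn
      obtain ⟨k, hk, hkx⟩ := hksurj n
      refine ⟨k, hk, ?_⟩
      rcases lt_or_ge n (k * x) with hlt | hle
      · left
        rw [hLmem]
        have h2 : d * (n / d) + k * x % d = n := by
          conv_rhs => rw [← Nat.div_add_mod n d]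
          omega
        refine ⟨n / d, ?_, by omega⟩
        have h3 : d * (k * x / d) + k * x % d = k * x := Nat.div_add_mod _ _
        have h4 : d * (n / d) < d * (k * x / d) := by omega
        exact Nat.lt_of_mul_lt_mul_left h4
      · right
        rw [hHmem]
        have hdvd : d ∣ n - k * x := by
          have : k * x ≡ n [MOD d] := by unfold Nat.ModEq; omega
          exact (Nat.modEq_iff_dvd' hle).mp this
        obtain ⟨m, hmeq⟩ := hdvd
        refine ⟨m, fun hmS => hn ((hmem n).mpr ⟨k, hk, m, hmS, by omega⟩), by omega⟩
    · rintro ⟨k, hk, hn⟩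
      exact hGap k hk n (Finset.mem_union.mpr hn)
  rw [hTc, Set.ncard_coe_finset]
  -- disjointness of the pieces across k
  have hdisj : ∀ k ∈ Finset.range d, ∀ k' ∈ Finset.range d, k ≠ k' →
      Disjoint (L k ∪ H k) (L k' ∪ H k') := by
    intro k hk k' hk' hne
    simp only [Finset.mem_range] at hk hk'
    rw [Finset.disjoint_left]
    intro n hn hn'
    have h1 : n % d = k * x % d := by
      rcases Finset.mem_union.mp hn with h | h
      · exact (hLprop k n h).1
      · exact (hHprop k n h).1
    have h2 : n % d = k' * x % d := by
      rcases Finset.mem_union.mp hn' with h | h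
      · exact (hLprop k' n h).1
      · exact (hHprop k' n h).1
    exact hne (hkinj k k' hk hk' (by omega))
  rw [Finset.card_biUnion hdisj]
  -- card of each piece
  have hcard : ∀ k, (L k ∪ H k).card = k * x / d + G.card := by
    intro k
    have hdisjLH : Disjoint (L k) (H k) := by
      rw [Finset.disjoint_left]
      intro n hn hn'
      have := (hLprop k n hn).2
      have := (hHprop k n hn').2
      omega
    rw [Finset.card_union_of_disjoint hdisjLH]
    congr 1
    · rw [hLdef]
      rw [Finset.card_image_of_injective _ (fun a b hab => by simp at hab; omega)]
      exact Finset.card_range _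
    · rw [hHdef]
      exact Finset.card_image_of_injective _ (fun a b hab => by simp at hab; omega)
  have hGcard : G.card = (Sᶜ : Set ℕ).ncard := by
    rw [hGdef, Set.ncard_eq_toFinset_card _ hSfin]
  calc ∑ k ∈ Finset.range d, (L k ∪ H k).card
      = ∑ k ∈ Finset.range d, (k * x / d + G.card) := by
        apply Finset.sum_congr rfl; intro k _; exact hcard k
    _ = (∑ k ∈ Finset.range d, k * x / d) + d * G.card := by
        rw [Finset.sum_add_distrib, Finset.sum_const, Finset.card_range, smul_eq_mul, mul_comm]
    _ = (d - 1) * (x - 1) / 2 + d * (Sᶜ : Set ℕ).ncard := by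
        rw [sum_div_gauss d x hd hg, hGcard]
end

section
/- Let S ≠ ℕ be a numerical semigroup, d a positive integer, and x ∈ S with gcd(x,d) = 1 and x ∉ d·S. If T = ⟨x⟩ + d·S, then PF(T) = {d·f + (d−1)·x : f ∈ PF(S)}. In particular the type of T equals the type of S. -/
open scoped Pointwise

lemma mem_genx (x y : ℕ) : y ∈ gen {x} ↔ ∃ k, y = k * x := by
  simp [gen, AddSubmonoid.mem_closure_singleton, eq_comm, smul_eq_mul]

lemma memT_raw {S : Set ℕ} {d x : ℕ} {T : Set ℕ} (hT : T = gen {x} + dmul d S) {t : ℕ} :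
    t ∈ T ↔ ∃ k s, s ∈ S ∧ t = k * x + d * s := by
  subst hT
  constructor
  · intro h
    obtain ⟨a, ha, b, hb, hab⟩ := Set.mem_add.1 h
    obtain ⟨k, rfl⟩ := (mem_genx x a).1 ha
    obtain ⟨s, hs, rfl⟩ := hb
    exact ⟨k, s, hs, hab.symm⟩
  · rintro ⟨k, s, hs, rfl⟩
    exact Set.mem_add.2 ⟨k * x, (mem_genx x _).2 ⟨k, rfl⟩, d * s, ⟨s, hs, rfl⟩, rfl⟩

lemma reduceT {S : Set ℕ} {d x : ℕ} (hd : 0 < d) (hx : x ∈ S)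
    (hSadd : ∀ a ∈ S, ∀ b ∈ S, a + b ∈ S) :
    ∀ k s, s ∈ S → ∃ k' s', k' < d ∧ s' ∈ S ∧ k * x + d * s = k' * x + d * s' := by
  intro k
  induction k using Nat.strong_induction_on with
  | _ k ih =>
    intro s hs
    by_cases hk : k < d
    · exact ⟨k, s, hk, hs, rfl⟩
    · push_neg at hk
      obtain ⟨m, rfl⟩ := Nat.exists_eq_add_of_le hk
      obtain ⟨k', s', h1, h2, h3⟩ := ih m (by omega) (s + x) (hSadd s hs x hx)
      refine ⟨k', s', h1, h2, ?_⟩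
      rw [← h3]; ring

lemma uniqT {d x : ℕ} (hg : Nat.gcd x d = 1) {k1 k2 s1 s2 : ℕ}
    (h1 : k1 < d) (h2 : k2 < d) (h : k1 * x + d * s1 = k2 * x + d * s2) :
    k1 = k2 ∧ s1 = s2 := by
  have hmod : k1 * x ≡ k2 * x [MOD d] := by
    have : (k1 * x + d * s1) % d = (k2 * x + d * s2) % d := by rw [h]
    simpa [Nat.ModEq, Nat.add_mul_mod_self_left, Nat.mul_mod_right,
      Nat.add_mod, Nat.mul_mod_right] using this
  have hk : k1 ≡ k2 [MOD d] := hmod.cancel_right_of_coprime ((Nat.gcd_comm d x).trans hg)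
  have hkk : k1 = k2 := hk.eq_of_lt_of_lt h1 h2
  refine ⟨hkk, ?_⟩
  subst hkk
  have : d * s1 = d * s2 := by omega
  exact Nat.eq_of_mul_eq_mul_left (by omega) this

lemma no_sub (S : Set ℕ) (hfin : (Sᶜ : Set ℕ).Finite) (hSne : S ≠ Set.univ)
    (c : ℕ) (hc : 0 < c) (H : ∀ s ∈ S, s ≠ 0 → c ≤ s ∧ s - c ∈ S) : False := by
  have hdvd : ∀ s ∈ S, c ∣ s := by
    intro s
    induction s using Nat.strong_induction_on with
    | _ s ih =>
      intro hs
      rcases eq_or_ne s 0 with rfl | hs0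
      · exact Dvd.intro 0 rfl
      · obtain ⟨hle, hmem⟩ := H s hs hs0
        have h1 := ih (s - c) (by omega) hmem
        have := h1.add (dvd_refl c)
        rwa [Nat.sub_add_cancel hle] at this
  have hinf : S.Infinite := by
    have := hfin.infinite_compl
    simpa using this
  rcases eq_or_lt_of_le (show 1 ≤ c from hc) with hc1 | hc2
  · apply hSne
    ext n
    simp only [Set.mem_univ, iff_true]
    obtain ⟨s, hs, hns⟩ := hinf.exists_gt n
    have key : ∀ j, ∀ s ∈ S, n + j = s → n ∈ S := by
      intro j
      induction j with
      | zero => intro s hs h; exact (by omega : n = s) ▸ hs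
      | succ j ih =>
        intro s hs h
        have hs0 : s ≠ 0 := by omega
        obtain ⟨_, hmem⟩ := H s hs hs0
        exact ih (s - c) hmem (by omega)
    exact key (s - n) s hs (by omega)
  · have hinj : Set.InjOn (fun k => k * c + 1) Set.univ := by
      intro a _ b _ hab
      simp only at hab
      exact Nat.eq_of_mul_eq_mul_right hc (by omega)
    have hsub : (fun k => k * c + 1) '' Set.univ ⊆ Sᶜ := by
      rintro _ ⟨k, -, rfl⟩
      intro hmem
      have h2 := (Nat.dvd_add_right ⟨k, mul_comm k c⟩).1 (hdvd _ hmem)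
      have : c = 1 := Nat.dvd_one.1 h2
      omega
    exact ((Set.infinite_univ.image hinj).mono hsub) hfin

theorem stmt16 (S : Set ℕ) (d x : ℕ) (hd : 0 < d)
    (hS : IsNumSgp S) (hSne : S ≠ Set.univ)
    (hx : x ∈ S) (hg : Nat.gcd x d = 1) (hxd : x ∉ dmul d S)
    (T : Set ℕ) (hT : T = gen {x} + dmul d S) :
    PF T = {y | ∃ f ∈ PF S, y = d * f + (d - 1) * x} ∧
      (PF T).ncard = (PF S).ncard := by
  obtain ⟨h0, hSadd, hfin⟩ := hS
  -- d ≥ 2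
  have hd2 : 2 ≤ d := by
    by_contra h
    have hd1 : d = 1 := by omega
    subst hd1
    exact hxd ⟨x, hx, one_mul x⟩
  obtain ⟨e, rfl⟩ : ∃ e, d = e + 2 := ⟨d - 2, by omega⟩
  set d := e + 2 with hdset
  have hd1 : d - 1 = e + 1 := by omega
  -- x > 0
  have hx0 : 0 < x := by
    rcases Nat.eq_zero_or_pos x with rfl | h
    · exact absurd ⟨0, h0, by simp⟩ hxd
    · exact h
  have memT : ∀ t, t ∈ T ↔ ∃ k s, k < d ∧ s ∈ S ∧ t = k * x + d * s := by
    intro t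
    rw [memT_raw hT]
    constructor
    · rintro ⟨k, s, hs, rfl⟩
      obtain ⟨k', s', h1, h2, h3⟩ := reduceT hd hx hSadd k s hs
      exact ⟨k', s', h1, h2, h3⟩
    · rintro ⟨k, s, _, hs, rfl⟩
      exact ⟨k, s, hs, rfl⟩
  have hmain : PF T = {y | ∃ f ∈ PF S, y = d * f + (d - 1) * x} := by
    ext z
    simp only [Set.mem_setOf_eq]
    constructor
    · rintro ⟨hzT, hzadd⟩
      -- z + x ∈ T gives z + x = d * s'
      have xT : x ∈ T := (memT x).2 ⟨1, 0, by omega, h0, by ring⟩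
      have hzx : z + x ∈ T := hzadd x xT (by omega)
      obtain ⟨k, s', hk, hs', heq⟩ := (memT _).1 hzx
      rcases Nat.eq_zero_or_pos k with rfl | hk1
      · -- k = 0 : z + x = d * s'
        simp only [zero_mul, zero_add] at heq
        -- key step: for all nonzero s ∈ S, x ≤ s' + s and s' + s - x ∈ S
        have H2 : ∀ s ∈ S, s ≠ 0 → x ≤ s' + s ∧ s' + s - x ∈ S := by
          intro s hs hs0
          have hds : d * s ∈ T := (memT _).2 ⟨0, s, by omega, hs, by ring⟩
          have hzds : z + d * s ∈ T := hzadd _ hds (by positivity)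
          obtain ⟨k', u, hk', hu, hequ⟩ := (memT _).1 hzds
          -- d*(s'+s) = (k'+1)*x + d*u
          have hbig : d * (s' + s) = (k' + 1) * x + d * u := by
            have : z + x + d * s = k' * x + d * u + x := by omega
            rw [heq] at this
            have h2 : d * (s' + s) = d * s' + d * s := by ring
            have h5 : (k' + 1) * x = k' * x + x := by ring
            omega
          rcases Nat.lt_or_ge (k' + 1) d with hlt | hge
          · -- impossible: uniqueness forces k'+1 = 0
            have h0eq : (0 : ℕ) * x + d * (s' + s) = (k' + 1) * x + d * u := by
              simpa using hbig
            have := (uniqT hg (by omega) hlt h0eq).1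
            omega
          · -- k' = d - 1
            have hkd : k' + 1 = d := by omega
            rw [hkd] at hbig
            have hsum : s' + s = x + u := by
              have h3 : d * (s' + s) = d * (x + u) := by rw [hbig]; ring
              exact Nat.eq_of_mul_eq_mul_left (by omega) h3
            constructor
            · omega
            · have : s' + s - x = u := by omega
              rw [this]; exact hu
        -- show x ≤ s'
        rcases Nat.lt_or_ge s' x with hlt | hge
        · exfalso
          apply no_sub S hfin hSne (x - s') (by omega)
          intro s hs hs0
          obtain ⟨h1, h2⟩ := H2 s hs hs0
          refine ⟨by omega, ?_⟩
          have : s - (x - s') = s' + s - x := by omega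
          rw [this]; exact h2
        · -- f = s' - x works
          refine ⟨s' - x, ⟨?_, ?_⟩, ?_⟩
          · -- s' - x ∉ S
            intro hmem
            apply hzT
            refine (memT z).2 ⟨d - 1, s' - x, by omega, hmem, ?_⟩
            have h4 : d * s' = d * (s' - x) + d * x := by
              rw [← Nat.mul_add, Nat.sub_add_cancel hge]
            rw [hd1]
            have h5 : (e + 1) * x + x = d * x := by ring
            omega
          · intro s hs hs0
            obtain ⟨h1, h2⟩ := H2 s hs hs0
            have : s' - x + s = s' + s - x := by omega
            rw [this]; exact h2
          · rw [hd1]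
            have h4 : d * s' = d * (s' - x) + d * x := by
              rw [← Nat.mul_add, Nat.sub_add_cancel hge]
            have h5 : (e + 1) * x + x = d * x := by ring
            omega
      · -- k ≥ 1 : contradiction, z ∈ T
        exfalso
        apply hzT
        obtain ⟨m, rfl⟩ : ∃ m, k = m + 1 := ⟨k - 1, by omega⟩
        refine (memT z).2 ⟨m, s', by omega, hs', ?_⟩
        have : (m + 1) * x = m * x + x := by ring
        omega
    · rintro ⟨f, ⟨hfS, hfadd⟩, rfl⟩
      rw [hd1]
      constructor
      · intro hzT
        obtain ⟨k, s, hk, hs, heq⟩ := (memT _).1 hzT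
        have h1 : (d - 1) * x + d * f = k * x + d * s := by rw [hd1]; omega
        obtain ⟨hkk, hss⟩ := uniqT hg (by omega) hk h1
        exact hfS (hss ▸ hs)
      · intro t htT ht0
        obtain ⟨k, s, hk, hs, rfl⟩ := (memT _).1 htT
        rcases eq_or_ne s 0 with rfl | hs0
        · -- t = k * x, k ≥ 1
          have hk1 : 1 ≤ k := by
            rcases Nat.eq_zero_or_pos k with rfl | h
            · simp at ht0
            · exact h
          obtain ⟨m, rfl⟩ : ∃ m, k = m + 1 := ⟨k - 1, by omega⟩
          exact (memT_raw hT).2 ⟨m, f + x, hfadd x hx (by omega), by ring⟩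
        · refine (memT_raw hT).2 ⟨e + 1 + k, f + s, hfadd s hs hs0, by ring⟩
  refine ⟨hmain, ?_⟩
  rw [hmain]
  have himg : {y | ∃ f ∈ PF S, y = d * f + (d - 1) * x}
      = (fun f => d * f + (d - 1) * x) '' PF S := by
    ext y
    simp [Set.mem_image, eq_comm]
  rw [himg]
  apply Set.ncard_image_of_injective
  intro a b hab
  simp only at hab
  have : d * a = d * b := by omega
  exact Nat.eq_of_mul_eq_mul_left (by omega) this
end

section
/- Let S ≠ ℕ be a numerical semigroup, d a positive integer, and x ∈ S with gcd(x,d) = 1 and x ∉ d·S. If T = ⟨x⟩ + d·S, then S is symmetric if and only if T is symmetric. -/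
open scoped Pointwise

lemma aux_mul_mem (S : Set ℕ) (hS : IsNumSgp S) {x : ℕ} (hx : x ∈ S) (k : ℕ) : k * x ∈ S := by
  induction k with
  | zero => simpa using hS.1
  | succ n ih =>
    have := hS.2.1 _ ih _ hx
    simpa [Nat.succ_mul] using this

lemma aux_residue (d x : ℕ) (hd : 0 < d) (hg : Nat.gcd x d = 1) (z : ℤ) :
    ∃ k : ℕ, k < d ∧ (d : ℤ) ∣ z - k * x := by
  have hcop : IsCoprime (x : ℤ) (d : ℤ) := by
    rw [Int.isCoprime_iff_gcd_eq_one]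
    simpa [Int.gcd] using hg
  obtain ⟨u, v, huv⟩ := hcop
  refine ⟨((z * u) % d).toNat, ?_, ?_⟩
  · have h1 : 0 ≤ (z * u) % d := Int.emod_nonneg _ (by exact_mod_cast hd.ne')
    have h2 : (z * u) % d < d := Int.emod_lt_of_pos _ (by exact_mod_cast hd)
    omega
  · have h1 : 0 ≤ (z * u) % d := Int.emod_nonneg _ (by exact_mod_cast hd.ne')
    have hk : (((z * u) % d).toNat : ℤ) = (z * u) % d := Int.toNat_of_nonneg h1
    rw [hk]
    have hdvd : (d : ℤ) ∣ z * u - (z * u) % d := Int.dvd_self_sub_of_emod_eq rfl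
    have heq : z - ((z * u) % d) * x = (z * u - (z * u) % d) * x + (z * v) * d := by
      have h2 : z * (u * x + v * d) = z := by rw [huv]; ring
      nlinarith [h2]
    rw [heq]
    exact dvd_add (Dvd.dvd.mul_right hdvd x) ⟨z * v, by ring⟩

lemma aux_residue_unique (d x : ℕ) (hg : Nat.gcd x d = 1) {k k' : ℕ} (hk : k < d) (hk' : k' < d)
    (h : (d : ℤ) ∣ (k : ℤ) * x - k' * x) : k = k' := by
  have hcop : IsCoprime ((d : ℤ)) (x : ℤ) := by
    rw [Int.isCoprime_iff_gcd_eq_one, Int.gcd_comm]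
    simpa [Int.gcd] using hg
  have h2 : (d : ℤ) ∣ ((k : ℤ) - k') * x := by
    have h3 : ((k : ℤ) - k') * x = (k : ℤ) * x - k' * x := by ring
    rwa [h3]
  obtain ⟨c, hc⟩ := hcop.dvd_of_dvd_mul_right h2
  have hd1 : (0 : ℤ) < d := by exact_mod_cast lt_of_le_of_lt (Nat.zero_le k) hk
  have hkz : (0 : ℤ) ≤ (k : ℤ) := Int.natCast_nonneg k
  have hkz' : (0 : ℤ) ≤ (k' : ℤ) := Int.natCast_nonneg k'
  have hkd : (k : ℤ) < d := by exact_mod_cast hk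
  have hkd' : (k' : ℤ) < d := by exact_mod_cast hk'
  have hc0 : c = 0 := by
    rcases lt_trichotomy c 0 with h | h | h
    · have h4 : (d : ℤ) * c ≤ d * (-1) := mul_le_mul_of_nonneg_left (by omega) hd1.le
      linarith
    · exact h
    · have h4 : (d : ℤ) * 1 ≤ d * c := mul_le_mul_of_nonneg_left (by omega) hd1.le
      linarith
  rw [hc0, mul_zero] at hc
  omega

lemma aux_memT (S : Set ℕ) (d x : ℕ) (hS : IsNumSgp S) (hx : x ∈ S) (hd : 0 < d)
    (T : Set ℕ) (hT : T = gen {x} + dmul d S) (n : ℕ) :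
    n ∈ T ↔ ∃ k, k < d ∧ ∃ m ∈ S, n = k * x + d * m := by
  constructor
  · intro hn
    rw [hT] at hn
    obtain ⟨a, ha, b, hb, hab⟩ := Set.mem_add.mp hn
    obtain ⟨j, hj⟩ := AddSubmonoid.mem_closure_singleton.mp ha
    obtain ⟨s, hs, hbs⟩ := hb
    refine ⟨j % d, Nat.mod_lt _ hd, s + (j / d) * x, hS.2.1 _ hs _ (aux_mul_mem S hS hx _), ?_⟩
    have hj' : a = j * x := by simpa [smul_eq_mul] using hj.symm
    have hjd : j = d * (j / d) + j % d := (Nat.div_add_mod j d).symm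
    subst hab hj' hbs
    calc j * x + d * s = (d * (j / d) + j % d) * x + d * s := by rw [← hjd]
      _ = (j % d) * x + d * (s + (j / d) * x) := by ring
  · rintro ⟨k, _, m, hm, rfl⟩
    rw [hT]
    exact Set.mem_add.mpr ⟨k * x, AddSubmonoid.mem_closure_singleton.mpr ⟨k, by simp [smul_eq_mul]⟩,
      d * m, ⟨m, hm, rfl⟩, rfl⟩

theorem stmt17 (S : Set ℕ) (d x : ℕ) (hd : 0 < d)
    (hS : IsNumSgp S) (hSne : S ≠ Set.univ)
    (hx : x ∈ S) (hg : Nat.gcd x d = 1) (hxd : x ∉ dmul d S)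
    (T : Set ℕ) (hT : T = gen {x} + dmul d S) :
    SymNS S ↔ SymNS T := by
  set g := Frob S with hgdef
  have hne : (Sᶜ : Set ℕ).Nonempty := by rw [Set.nonempty_compl]; exact hSne
  have hbdd : BddAbove (Sᶜ : Set ℕ) := hS.2.2.bddAbove
  have hgS : g ∉ S := Nat.sSup_mem hne hbdd
  have hgt : ∀ n, g < n → n ∈ S := by
    intro n hn
    by_contra hns
    have h1 : n ≤ g := le_csSup hbdd hns
    omega
  have memT := aux_memT S d x hS hx hd T hT
  have hd2 : 2 ≤ d := by
    rcases Nat.lt_or_ge d 2 with h | h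
    · have hd1 : d = 1 := by omega
      subst hd1
      exact absurd (show x ∈ dmul 1 S from ⟨x, hx, one_mul x⟩) hxd
    · exact h
  have h1d : 1 ≤ d := hd
  have memT_int : ∀ z : ℤ, z ∈ NatSet T ↔ ∃ k, k < d ∧ ∃ m ∈ S, z = (k : ℤ) * x + d * m := by
    intro z
    constructor
    · rintro ⟨n, hn, rfl⟩
      obtain ⟨k, hk, m, hm, hnm⟩ := (memT n).mp hn
      exact ⟨k, hk, m, hm, by exact_mod_cast congrArg (Nat.cast : ℕ → ℤ) hnm⟩
    · rintro ⟨k, hk, m, hm, rfl⟩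
      exact ⟨k * x + d * m, (memT _).mpr ⟨k, hk, m, hm, rfl⟩, by push_cast; ring⟩
  have hcastd : ((d - 1 : ℕ) : ℤ) = (d : ℤ) - 1 := by omega
  -- (d-1)*x + d*g is not in T
  have hNnotT : (d - 1) * x + d * g ∉ T := by
    intro h
    obtain ⟨k, hk, m, hm, hnm⟩ := (memT _).mp h
    have hnmz := congrArg (Nat.cast : ℕ → ℤ) hnm
    push_cast [hcastd] at hnmz
    have hdvd : (d : ℤ) ∣ (k : ℤ) * x - ((d - 1 : ℕ) : ℤ) * x := by
      refine ⟨(g : ℤ) - m, ?_⟩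
      rw [hcastd]
      linarith
    have hk1 : k = d - 1 := aux_residue_unique d x hg hk (by omega) hdvd
    subst hk1
    have hdm : d * g = d * m := by omega
    have : g = m := Nat.eq_of_mul_eq_mul_left hd hdm
    exact hgS (this ▸ hm)
  -- everything above (d-1)*x + d*g is in T
  have hallT : ∀ n : ℕ, (d - 1) * x + d * g < n → n ∈ T := by
    intro n hn
    obtain ⟨k, hk, e, he⟩ := aux_residue d x hd hg (n : ℤ)
    have hkx : (k : ℤ) * x ≤ ((d : ℤ) - 1) * x := by
      have h5 : (k : ℤ) ≤ (d : ℤ) - 1 := by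
        have : (k : ℤ) < d := by exact_mod_cast hk
        omega
      exact mul_le_mul_of_nonneg_right h5 (by positivity)
    have hn' : ((d : ℤ) - 1) * x + d * g < (n : ℤ) := by
      have h6 : (((d - 1) * x + d * g : ℕ) : ℤ) < (n : ℤ) := by exact_mod_cast hn
      push_cast [hcastd] at h6
      linarith
    have hge : (g : ℤ) < e := by
      have h7 : (d : ℤ) * g < (d : ℤ) * e := by linarith
      exact lt_of_mul_lt_mul_left h7 (by positivity)
    have he0 : (0 : ℤ) ≤ e := le_trans (Int.natCast_nonneg g) hge.le
    set m := e.toNat with hm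
    have hme : (m : ℤ) = e := Int.toNat_of_nonneg he0
    have hmS : m ∈ S := hgt m (by exact_mod_cast hme ▸ hge)
    refine (memT n).mpr ⟨k, hk, m, hmS, ?_⟩
    have : (n : ℤ) = (k : ℤ) * x + d * m := by rw [hme]; linarith
    exact_mod_cast this
  -- the Frobenius number of T
  have hFT : Frob T = (d - 1) * x + d * g := by
    have hub : ∀ b ∈ (Tᶜ : Set ℕ), b ≤ (d - 1) * x + d * g := by
      intro b hb
      by_contra h
      exact hb (hallT b (by omega))
    have hmem : (d - 1) * x + d * g ∈ (Tᶜ : Set ℕ) := hNnotT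
    exact le_antisymm (csSup_le ⟨_, hmem⟩ hub) (le_csSup ⟨_, hub⟩ hmem)
  have hFTz : (Frob T : ℤ) = ((d : ℤ) - 1) * x + d * g := by
    rw [hFT]; push_cast [hcastd]; ring
  constructor
  · -- S symmetric → T symmetric
    intro hsym z hz
    obtain ⟨k, hk, c, hc⟩ := aux_residue d x hd hg z
    have hcnot : c ∉ NatSet S := by
      rintro ⟨m, hm, rfl⟩
      exact hz ((memT_int z).mpr ⟨k, hk, m, hm, by linarith⟩)
    obtain ⟨m, hm, hmc⟩ := hsym c hcnot
    refine (memT_int _).mpr ⟨d - 1 - k, by omega, m, hm, ?_⟩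
    have h1 : ((d - 1 - k : ℕ) : ℤ) = (d : ℤ) - 1 - k := by omega
    rw [hFTz, h1]
    linear_combination (-1 : ℤ) * hc - (d : ℤ) * hmc
  · -- T symmetric → S symmetric
    intro hsymT w hw
    have hz : (d : ℤ) * w ∉ NatSet T := by
      intro hmem
      obtain ⟨k, hk, m, hm, heq⟩ := (memT_int _).mp hmem
      have hk0 : k = 0 := by
        refine aux_residue_unique d x hg hk hd ?_
        exact ⟨w - m, by push_cast; linarith⟩
      subst hk0
      have hwm : (d : ℤ) * w = d * m := by push_cast at heq; linarith
      have : (w : ℤ) = m := by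
        have hd0 : (d : ℤ) ≠ 0 := by positivity
        exact mul_left_cancel₀ hd0 hwm
      exact hw ⟨m, hm, this.symm⟩
    obtain ⟨k, hk, m, hm, heq⟩ := (memT_int _).mp (hsymT _ hz)
    rw [hFTz] at heq
    have hk1 : k = d - 1 := by
      refine aux_residue_unique d x hg hk (by omega) ?_
      refine ⟨(g : ℤ) - w - m, ?_⟩
      rw [hcastd]
      linarith
    subst hk1
    rw [hcastd] at heq
    have hcancel : (d : ℤ) * (g - w) = d * m := by linarith
    have hmgw : (g : ℤ) - w = m := by
      have hd0 : (d : ℤ) ≠ 0 := by positivity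
      exact mul_left_cancel₀ hd0 hcancel
    exact ⟨m, hm, hmgw.symm⟩
end

section
/- Let S be a numerical semigroup with minimal generating set {a_1, …, a_e}. Suppose for every i ∈ {1,…,e} that (Σ_{j≠i} a_j) − a_i ∉ S. Then for every nonempty J ⊆ {1,…,e} and nonnegative integers u_j (j ∉ J) not all zero, Σ_{j∈J} a_j ≠ Σ_{j∉J} u_j a_j; consequently S has full quotient rank, i.e., every numerical semigroup T with T/d = S for some d ≥ 1 has embedding dimension at least e. -/
open scoped Pointwise

lemma nsg_mul {S : Set ℕ} (hS : IsNumSgp S) (n x : ℕ) (hx : x ∈ S) : n * x ∈ S := by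
  induction n with
  | zero => simpa using hS.1
  | succ n ih => rw [Nat.succ_mul]; exact hS.2.1 _ ih _ hx

lemma nsg_sum {S : Set ℕ} (hS : IsNumSgp S) {α : Type*} (F : Finset α) (g : α → ℕ)
    (hg : ∀ j ∈ F, g j ∈ S) : (∑ j ∈ F, g j) ∈ S :=
  Finset.sum_induction g (· ∈ S) (fun a b ha hb => hS.2.1 a ha b hb) hS.1 hg

lemma msg_finite {T : Set ℕ} (hT : IsNumSgp T) : (msg T).Finite := by
  obtain ⟨N, hN⟩ := hT.2.2.bddAbove
  have hmem : ∀ x, N < x → x ∈ T := by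
    intro x hx
    by_contra h
    exact absurd (hN h) (by omega)
  apply Set.Finite.subset (Set.finite_Iic (2 * N + 2))
  intro x hx
  by_contra hxb
  simp only [Set.mem_Iic, not_le] at hxb
  have h1 : (N + 1) ∈ T := hmem _ (by omega)
  have h2 : (x - (N + 1)) ∈ T := hmem _ (by omega)
  exact hx.2.2 _ h1 _ h2 (by omega) (by omega) (by omega)

lemma exists_enum {A : Set ℕ} (hA : A.Finite) : ∃ b : Fin A.ncard → ℕ, A = Set.range b := by
  have h := hA.toFinset.equivFin
  rw [← Set.ncard_eq_toFinset_card A hA] at h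
  refine ⟨fun i => (h.symm i : ℕ), ?_⟩
  ext x
  constructor
  · intro hx
    exact ⟨h ⟨x, hA.mem_toFinset.mpr hx⟩, by simp⟩
  · rintro ⟨i, rfl⟩
    exact hA.mem_toFinset.mp (h.symm i).2

lemma msg_repr {T : Set ℕ} {k : ℕ} (b : Fin ((msg T).ncard) → ℕ)
    (hb : msg T = Set.range b) : ∀ t ∈ T, ∃ c : Fin ((msg T).ncard) → ℕ, t = ∑ ℓ, c ℓ * b ℓ := by
  intro t
  induction t using Nat.strong_induction_on with
  | _ t ih =>
    intro ht
    by_cases h0 : t = 0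
    · exact ⟨0, by simp [h0]⟩
    by_cases hm : t ∈ msg T
    · rw [hb] at hm
      obtain ⟨ℓ, hℓ⟩ := hm
      refine ⟨fun m => if m = ℓ then 1 else 0, ?_⟩
      simp [Finset.sum_ite_eq', hℓ]
    · simp only [msg, Set.mem_setOf_eq] at hm
      push_neg at hm
      obtain ⟨x, hx, y, hy, hx0, hy0, hxy⟩ := hm ht h0
      obtain ⟨cx, hcx⟩ := ih x (by omega) hx
      obtain ⟨cy, hcy⟩ := ih y (by omega) hy
      exact ⟨cx + cy, by
        rw [← hxy, hcx, hcy, ← Finset.sum_add_distrib]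
        exact Finset.sum_congr rfl fun ℓ _ => by simp [add_mul]⟩

theorem stmt18 (S : Set ℕ) (e : ℕ) (a : Fin e → ℕ)
    (hS : IsNumSgp S) (hinj : Function.Injective a)
    (hmsg : msg S = Set.range a)
    (hap : ∀ i : Fin e, ¬ ∃ s ∈ S, s + a i = ∑ j ∈ Finset.univ.erase i, a j) :
    (∀ J : Finset (Fin e), J.Nonempty → ∀ u : Fin e → ℕ,
        (∃ i ∈ Jᶜ, u i ≠ 0) → ∑ j ∈ J, a j ≠ ∑ j ∈ Jᶜ, u j * a j)
    ∧ ∀ d : ℕ, 0 < d → ∀ T : Set ℕ, IsNumSgp T → quot T d = S →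
        e ≤ (msg T).ncard := by
  have haS : ∀ i, a i ∈ S := by
    intro i
    have : a i ∈ msg S := by rw [hmsg]; exact Set.mem_range_self i
    exact this.1
  constructor
  · rintro J hJ u ⟨i, hiJc, hui⟩ heq'
    have hiJ : i ∉ J := by simpa using hiJc
    set s := (∑ j ∈ Jᶜ.erase i, (u j + 1) * a j) + (u i - 1) * a i with hs
    have hsS : s ∈ S := by
      refine hS.2.1 _ ?_ _ (nsg_mul hS _ _ (haS i))
      exact nsg_sum hS _ _ fun j _ => nsg_mul hS _ _ (haS j)
    apply hap i
    refine ⟨s, hsS, ?_⟩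
    have hsplit : ∑ j ∈ Finset.univ.erase i, a j
        = (∑ j ∈ J, a j) + ∑ j ∈ Jᶜ.erase i, a j := by
      rw [← Finset.sum_union]
      · apply Finset.sum_congr _ fun _ _ => rfl
        ext j
        simp only [Finset.mem_erase, Finset.mem_union, Finset.mem_compl, Finset.mem_univ,
          and_true]
        constructor
        · intro hji
          by_cases hjJ : j ∈ J
          · exact Or.inl hjJ
          · exact Or.inr ⟨hji, hjJ⟩
        · rintro (hjJ | ⟨hji, _⟩)
          · intro hji; exact hiJ (hji ▸ hjJ)
          · exact hji
      · rw [Finset.disjoint_left]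
        intro j hjJ hj
        exact (Finset.mem_compl.mp (Finset.mem_of_mem_erase hj)) hjJ
    rw [hsplit, heq', ← Finset.add_sum_erase _ _ hiJc, hs]
    obtain ⟨v, hv⟩ : ∃ v, u i = v + 1 := ⟨u i - 1, by omega⟩
    have hsum : ∑ j ∈ Jᶜ.erase i, (u j + 1) * a j
        = (∑ j ∈ Jᶜ.erase i, u j * a j) + ∑ j ∈ Jᶜ.erase i, a j := by
      rw [← Finset.sum_add_distrib]
      exact Finset.sum_congr rfl fun ℓ _ => by ring
    rw [hsum, hv]
    simp only [Nat.add_sub_cancel]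
    ring
  · intro d hd T hT hquot
    have hfin := msg_finite hT
    obtain ⟨b, hb⟩ := exists_enum hfin
    have hda : ∀ i, d * a i ∈ T := by
      intro i
      have : a i ∈ quot T d := by rw [hquot]; exact haS i
      exact this
    have hbT : ∀ ℓ, b ℓ ∈ T := by
      intro ℓ
      have : b ℓ ∈ msg T := by rw [hb]; exact Set.mem_range_self ℓ
      exact this.1
    obtain ⟨c, hc⟩ : ∃ c : Fin e → Fin ((msg T).ncard) → ℕ, ∀ i, d * a i = ∑ ℓ, c i ℓ * b ℓ := by
      have hrepr := msg_repr (T := T) (k := (msg T).ncard) b hb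
      choose c hc using fun i => hrepr _ (hda i)
      exact ⟨c, hc⟩
    have key : ∀ i : Fin e, ∃ ℓ : Fin ((msg T).ncard), (∑ j, c j ℓ) < 2 * c i ℓ := by
      intro i
      by_contra hcon
      push_neg at hcon
      set t0 := ∑ ℓ, (∑ j, c j ℓ - 2 * c i ℓ) * b ℓ with ht0
      have htw : t0 ∈ T := nsg_sum hT _ _ fun ℓ _ => nsg_mul hT _ _ (hbT ℓ)
      set f := ∑ j, a j with hf
      have heq : t0 + 2 * (d * a i) = d * f := by
        have h1 : d * f = ∑ ℓ, (∑ j, c j ℓ) * b ℓ := by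
          rw [hf, Finset.mul_sum]
          calc ∑ j, d * a j = ∑ j, ∑ ℓ, c j ℓ * b ℓ := Finset.sum_congr rfl fun j _ => hc j
            _ = ∑ ℓ, ∑ j, c j ℓ * b ℓ := Finset.sum_comm
            _ = ∑ ℓ, (∑ j, c j ℓ) * b ℓ := Finset.sum_congr rfl fun ℓ _ =>
                  (Finset.sum_mul _ _ _).symm
        rw [h1, hc i, ht0, Finset.mul_sum, ← Finset.sum_add_distrib]
        refine Finset.sum_congr rfl fun ℓ _ => ?_
        rw [← mul_assoc, ← add_mul, Nat.sub_add_cancel (hcon ℓ)]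
      have hle : 2 * a i ≤ f := by
        have h2 : d * (2 * a i) ≤ d * f := by
          rw [← heq]
          have : d * (2 * a i) = 2 * (d * a i) := by ring
          omega
        exact Nat.le_of_mul_le_mul_left h2 hd
      set s := f - 2 * a i with hsdef
      have hA : d * s + 2 * (d * a i) = d * f := by
        rw [show 2 * (d * a i) = d * (2 * a i) by ring, ← Nat.mul_add]
        congr 1
        omega
      have hds : d * s = t0 := Nat.add_right_cancel (hA.trans heq.symm)
      have hsS : s ∈ S := by
        have : s ∈ quot T d := by
          show d * s ∈ T
          rw [hds]; exact htw
        rwa [hquot] at this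
      apply hap i
      refine ⟨s, hsS, ?_⟩
      have hfe : a i + ∑ j ∈ Finset.univ.erase i, a j = f :=
        Finset.add_sum_erase _ _ (Finset.mem_univ i)
      omega
    choose ℓf hℓ using key
    have hinj2 : Function.Injective ℓf := by
      intro i i' hii
      by_contra hne
      have h1 := hℓ i
      have h2 := hℓ i'
      rw [hii] at h1
      have hsum : c i (ℓf i') + c i' (ℓf i') ≤ ∑ j, c j (ℓf i') := by
        have hsub := Finset.sum_le_sum_of_subset
          (Finset.subset_univ ({i, i'} : Finset (Fin e))) (f := fun j => c j (ℓf i'))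
        rwa [Finset.sum_pair hne] at hsub
      omega
    calc e = Fintype.card (Fin e) := (Fintype.card_fin e).symm
      _ ≤ Fintype.card (Fin ((msg T).ncard)) := Fintype.card_le_of_injective ℓf hinj2
      _ = (msg T).ncard := Fintype.card_fin _
end

section
/- Let S be a numerical semigroup with minimal generating set {a_1 < a_2 < … < a_e}. If for every i ∈ {1,…,e} one has (Σ_{j≠i} a_j) − a_i ∉ S, then a_1 ≥ 2^{e−1}. -/
open scoped Pointwise

theorem stmt19 (S : Set ℕ) (e : ℕ) (he : 0 < e) (a : Fin e → ℕ)
    (hS : IsNumSgp S) (hmono : StrictMono a)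
    (hmsg : msg S = Set.range a)
    (hap : ∀ i : Fin e, ¬ ∃ s ∈ S, s + a i = ∑ j ∈ Finset.univ.erase i, a j) :
    2 ^ (e - 1) ≤ a ⟨0, he⟩ := by
  classical
  set i0 : Fin e := ⟨0, he⟩ with hi0
  obtain ⟨h0S, hadd, hfin⟩ := hS
  have haS : ∀ j, a j ∈ S := fun j => by
    have : a j ∈ msg S := hmsg ▸ Set.mem_range_self j
    exact this.1
  have hane : ∀ j, a j ≠ 0 := fun j => by
    have : a j ∈ msg S := hmsg ▸ Set.mem_range_self j
    exact this.2.1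
  have hsumS : ∀ J : Finset (Fin e), (∑ j ∈ J, a j) ∈ S := by
    intro J
    induction J using Finset.induction with
    | empty => simpa using h0S
    | insert _ _ h ih =>
      rw [Finset.sum_insert h]
      exact hadd _ (haS _) _ ih
  have hmulS : ∀ (k n : ℕ), n ∈ S → k * n ∈ S := by
    intro k n hn
    induction k with
    | zero => simpa using h0S
    | succ m ih =>
      have : (m + 1) * n = m * n + n := by ring
      rw [this]
      exact hadd _ ih _ hn
  set P : Finset (Fin e) := Finset.univ.erase i0 with hP
  -- distinctness of subset sums over P
  have hdist : ∀ J K : Finset (Fin e), J ⊆ P → K ⊆ P →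
      (∑ j ∈ J, a j) = (∑ j ∈ K, a j) → J = K := by
    intro J K hJ hK hsum
    by_contra hne
    have h1 := Finset.sum_inter_add_sum_sdiff J K a
    have h2 := Finset.sum_inter_add_sum_sdiff K J a
    rw [Finset.inter_comm] at h2
    have hJ'K' : (∑ j ∈ J \ K, a j) = (∑ j ∈ K \ J, a j) := by omega
    have hJ'ne : (J \ K).Nonempty := by
      rcases Finset.eq_empty_or_nonempty (J \ K) with h | h
      · exfalso
        rw [h, Finset.sum_empty] at hJ'K'
        have hK' : K \ J = ∅ := by
          by_contra hKne
          obtain ⟨k, hk⟩ := Finset.nonempty_iff_ne_empty.mpr hKne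
          exact hane k (Finset.sum_eq_zero_iff.mp hJ'K'.symm k hk)
        exact hne (Finset.Subset.antisymm (Finset.sdiff_eq_empty_iff_subset.mp h)
          (Finset.sdiff_eq_empty_iff_subset.mp hK'))
      · exact h
    obtain ⟨i, hi⟩ := hJ'ne
    apply hap i
    have hKJsub : K \ J ⊆ Finset.univ \ (J \ K) := by
      intro x hx
      simp only [Finset.mem_sdiff, Finset.mem_univ, true_and] at hx ⊢
      intro hx'
      exact hx'.2 hx.1
    have e1 : a i + ∑ j ∈ (J \ K).erase i, a j = ∑ j ∈ J \ K, a j :=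
      Finset.add_sum_erase _ a hi
    have e2 : (∑ j ∈ Finset.univ \ (J \ K), a j) + ∑ j ∈ J \ K, a j
        = ∑ j ∈ (Finset.univ : Finset (Fin e)), a j :=
      Finset.sum_sdiff (Finset.subset_univ _)
    have e3 : (∑ j ∈ (Finset.univ \ (J \ K)) \ (K \ J), a j) + ∑ j ∈ K \ J, a j
        = ∑ j ∈ Finset.univ \ (J \ K), a j :=
      Finset.sum_sdiff hKJsub
    have e4 : a i + ∑ j ∈ Finset.univ.erase i, a j
        = ∑ j ∈ (Finset.univ : Finset (Fin e)), a j :=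
      Finset.add_sum_erase _ a (Finset.mem_univ i)
    refine ⟨2 * (∑ j ∈ (J \ K).erase i, a j)
      + (∑ j ∈ (Finset.univ \ (J \ K)) \ (K \ J), a j), ?_, ?_⟩
    · have hx : 2 * (∑ j ∈ (J \ K).erase i, a j) ∈ S := hmulS 2 _ (hsumS _)
      exact hadd _ hx _ (hsumS _)
    · omega
  -- Apéry property
  have hAp : ∀ J : Finset (Fin e), J ⊆ P → ∀ t ∈ S, t + a i0 ≠ ∑ j ∈ J, a j := by
    intro J hJ t ht heq
    apply hap i0
    refine ⟨t + ∑ j ∈ P \ J, a j, hadd _ ht _ (hsumS _), ?_⟩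
    have := Finset.sum_sdiff (f := a) hJ
    rw [← hP]
    omega
  have hn : 0 < a i0 := Nat.pos_of_ne_zero (hane i0)
  -- half of injectivity
  have hkey : ∀ J K : Finset (Fin e), J ⊆ P → K ⊆ P →
      (∑ j ∈ J, a j) ≤ (∑ j ∈ K, a j) →
      (∑ j ∈ J, a j) % a i0 = (∑ j ∈ K, a j) % a i0 → J = K := by
    intro J K hJ hK hle hmod
    obtain ⟨m, hm⟩ := (Nat.modEq_iff_dvd' hle).mp hmod
    rcases Nat.eq_zero_or_pos m with hm0 | hmpos
    · rw [hm0, Nat.mul_zero] at hm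
      exact hdist J K hJ hK (by omega)
    · exfalso
      apply hAp K hK (∑ j ∈ J, a j + a i0 * (m - 1))
        (hadd _ (hsumS _) _ (by rw [mul_comm]; exact hmulS _ _ (haS i0)))
      have : a i0 * m = a i0 * (m - 1) + a i0 := by
        cases m with
        | zero => omega
        | succ k => simp [Nat.mul_succ]
      omega
  have hinj : Set.InjOn (fun J : Finset (Fin e) => (∑ j ∈ J, a j) % a i0)
      (P.powerset : Finset (Finset (Fin e))) := by
    intro J hJ K hK hmod
    simp only [Finset.coe_powerset, Set.mem_preimage, Set.mem_powerset_iff,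
      Finset.coe_subset, Finset.mem_coe, Finset.mem_powerset] at hJ hK
    rcases le_total (∑ j ∈ J, a j) (∑ j ∈ K, a j) with h | h
    · exact hkey J K hJ hK h hmod
    · exact (hkey K J hK hJ h hmod.symm).symm
  have hcard : P.powerset.card ≤ a i0 := by
    have hmaps : ∀ J ∈ P.powerset, (∑ j ∈ J, a j) % a i0 ∈ Finset.range (a i0) := by
      intro J _
      exact Finset.mem_range.mpr (Nat.mod_lt _ hn)
    have := Finset.card_le_card_of_injOn _ hmaps hinj
    simpa using this
  have hPc : P.card = e - 1 := by
    rw [hP, Finset.card_erase_of_mem (Finset.mem_univ i0), Finset.card_univ,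
      Fintype.card_fin]
  calc 2 ^ (e - 1) = P.powerset.card := by rw [Finset.card_powerset, hPc]
    _ ≤ a i0 := hcard
end
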